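/- arXiv:1402.2471 — 11 statements merged into one kernel-verified Lean document; each statement's English description precedes it below -/
import Mathlib

section
/- If a K_{s,t}-saturated n-by-n bipartite graph has minimum degree δ with δ < t-1, then it contains at least n(s+t-2) - (s+t-2)^2 edges. -/
open Finset

/-- The bipartite graph (with parts indexed by `Fin n`) whose edge set is `E`
contains a complete bipartite graph with `a` vertices on the left and `b` on the right. -/
def containsK {n : ℕ} (E : Finset (Fin n × Fin n)) (a b : ℕ) : Prop :=
  ∃ S T : Finset (Fin n), S.card = a ∧ T.card = b ∧ ∀ u ∈ S, ∀ v ∈ T, (u, v) ∈ E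

/-- `E` is (unordered) `K_{s,t}`-saturated: no copy of `K_{s,t}` in either orientation,
and adding any missing edge creates one. -/
def Saturated {n : ℕ} (s t : ℕ) (E : Finset (Fin n × Fin n)) : Prop :=
  ¬ (containsK E s t ∨ containsK E t s) ∧
    ∀ u v : Fin n, (u, v) ∉ E →
      (containsK (insert (u, v) E) s t ∨ containsK (insert (u, v) E) t s)

/-- Degree of a left vertex. -/
def degL {n : ℕ} (E : Finset (Fin n × Fin n)) (u : Fin n) : ℕ :=
  (E.filter fun p => p.1 = u).card

/-- Degree of a right vertex. -/
def degR {n : ℕ} (E : Finset (Fin n × Fin n)) (v : Fin n) : ℕ :=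
  (E.filter fun p => p.2 = v).card

set_option maxHeartbeats 1000000 in
lemma stmt1_core {n : ℕ} (s t δ : ℕ) (hs : 1 ≤ s) (hst : s ≤ t) (htn : t ≤ n)
    (E : Finset (Fin n × Fin n)) (hsat : Saturated s t E)
    (hminL : ∀ u : Fin n, δ ≤ degL E u) (u₀ : Fin n) (hu₀ : degL E u₀ = δ)
    (hδ : δ < t - 1) :
    (n : ℤ) * (s + t - 2 : ℕ) - ((s + t - 2 : ℕ) : ℤ) ^ 2 ≤ (E.card : ℤ) := by
  have ht2 : 2 ≤ t := by omega
  have hδt : δ + 2 ≤ t := by omega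
  -- the neighborhood of u₀
  obtain ⟨N, hmemN, hcardN⟩ :
      ∃ N : Finset (Fin n), (∀ y : Fin n, y ∈ N ↔ (u₀, y) ∈ E) ∧ N.card = δ := by
    refine ⟨(E.filter fun p => p.1 = u₀).image Prod.snd, fun y => ?_, ?_⟩
    · constructor
      · intro h
        rcases mem_image.1 h with ⟨p, hp, hp2⟩
        rcases mem_filter.1 hp with ⟨hpE, hp1⟩
        have hpy : p = (u₀, y) := Prod.ext hp1 hp2
        rwa [hpy] at hpE
      · intro h
        exact mem_image.2 ⟨(u₀, y), mem_filter.2 ⟨h, rfl⟩, rfl⟩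
    · rw [card_image_of_injOn]
      · exact hu₀
      · intro p hp q hq hpq
        have hp1 : p.1 = u₀ := (mem_filter.1 hp).2
        have hq1 : q.1 = u₀ := (mem_filter.1 hq).2
        exact Prod.ext (hp1.trans hq1.symm) hpq
  -- the witness structure for every non-neighbor of u₀
  have hwit : ∀ v : Fin n, (u₀, v) ∉ E →
      ∃ W A : Finset (Fin n), W.card = t - 1 ∧ A.card = s - 1 ∧
        (∀ a ∈ A, a ∈ N) ∧ (∀ w ∈ W, (w, v) ∈ E) ∧ (∀ w ∈ W, ∀ a ∈ A, (w, a) ∈ E) := by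
    intro v hv
    rcases hsat.2 u₀ v hv with ⟨S, T, hScard, hTcard, hall⟩ | ⟨S, T, hScard, hTcard, hall⟩
    · exfalso
      by_cases hsub : ∀ a ∈ S, ∀ b ∈ T, (a, b) ∈ E
      · exact hsat.1 (Or.inl ⟨S, T, hScard, hTcard, hsub⟩)
      · push_neg at hsub
        obtain ⟨a, ha, b, hb, hab⟩ := hsub
        have hins := hall a ha b hb
        rw [mem_insert] at hins
        rcases hins with heq | hE
        · rw [Prod.mk.injEq] at heq
          obtain ⟨rfl, rfl⟩ := heq
          have hsubN : T.erase b ⊆ N := by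
            intro y hy
            have hyT := mem_of_mem_erase hy
            have hyv : y ≠ b := ne_of_mem_erase hy
            have h2 := hall a ha y hyT
            rw [mem_insert] at h2
            rcases h2 with h' | h'
            · exfalso
              rw [Prod.mk.injEq] at h'
              exact hyv h'.2
            · exact (hmemN y).2 h'
          have hcard : t - 1 ≤ δ := by
            have h3 := card_le_card hsubN
            rwa [card_erase_of_mem hb, hTcard, hcardN] at h3
          omega
        · exact hab hE
    · by_cases hsub : ∀ a ∈ S, ∀ b ∈ T, (a, b) ∈ E
      · exact absurd (Or.inr ⟨S, T, hScard, hTcard, hsub⟩) hsat.1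
      · push_neg at hsub
        obtain ⟨a, ha, b, hb, hab⟩ := hsub
        have hins := hall a ha b hb
        rw [mem_insert] at hins
        rcases hins with heq | hE
        · rw [Prod.mk.injEq] at heq
          obtain ⟨rfl, rfl⟩ := heq
          refine ⟨S.erase a, T.erase b, ?_, ?_, ?_, ?_, ?_⟩
          · rw [card_erase_of_mem ha, hScard]
          · rw [card_erase_of_mem hb, hTcard]
          · intro x hx
            have hxT := mem_of_mem_erase hx
            have hxv : x ≠ b := ne_of_mem_erase hx
            have h2 := hall a ha x hxT
            rw [mem_insert] at h2
            rcases h2 with h' | h'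
            · exfalso; rw [Prod.mk.injEq] at h'; exact hxv h'.2
            · exact (hmemN x).2 h'
          · intro w hw
            have hwS := mem_of_mem_erase hw
            have hwu : w ≠ a := ne_of_mem_erase hw
            have h2 := hall w hwS b hb
            rw [mem_insert] at h2
            rcases h2 with h' | h'
            · exfalso; rw [Prod.mk.injEq] at h'; exact hwu h'.1
            · exact h'
          · intro w hw x hx
            have hwS := mem_of_mem_erase hw
            have hwu : w ≠ a := ne_of_mem_erase hw
            have hxT := mem_of_mem_erase hx
            have h2 := hall w hwS x hxT
            rw [mem_insert] at h2
            rcases h2 with h' | h'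
            · exfalso; rw [Prod.mk.injEq] at h'; exact hwu h'.1
            · exact h'
        · exact absurd hE hab
  -- there is a non-neighbor, hence s - 1 ≤ δ
  have hvex : ∃ v : Fin n, (u₀, v) ∉ E := by
    by_contra h
    push_neg at h
    have hsub : (univ : Finset (Fin n)).image (fun v : Fin n => (u₀, v)) ⊆
        E.filter fun p => p.1 = u₀ := by
      intro p hp
      rcases mem_image.1 hp with ⟨v, _, rfl⟩
      exact mem_filter.2 ⟨h v, rfl⟩
    have hc := card_le_card hsub
    rw [card_image_of_injective _ (fun x y hxy => congrArg Prod.snd hxy)] at hc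
    have : (univ : Finset (Fin n)).card = n := by simp
    rw [this] at hc
    have : degL E u₀ = (E.filter fun p => p.1 = u₀).card := rfl
    omega
  have hs1δ : s - 1 ≤ δ := by
    obtain ⟨v₀, hv₀⟩ := hvex
    obtain ⟨W₀, A₀, _, hA₀card, hA₀N, _, _⟩ := hwit v₀ hv₀
    have hsubA : A₀ ⊆ N := fun a ha => hA₀N a ha
    have h3 := card_le_card hsubA
    rwa [hA₀card, hcardN] at h3
  -- the set Z of left vertices with at least s-1 neighbors in N
  obtain ⟨Z, hmemZ⟩ :
      ∃ Z : Finset (Fin n), ∀ w : Fin n,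
        w ∈ Z ↔ s - 1 ≤ (E.filter fun p => p.1 = w ∧ p.2 ∈ N).card := by
    refine ⟨univ.filter (fun w : Fin n =>
      s - 1 ≤ (E.filter fun p => p.1 = w ∧ p.2 ∈ N).card), fun w => ?_⟩
    simp only [mem_filter, mem_univ, true_and]
  have hZof : ∀ (w : Fin n) (A : Finset (Fin n)), A.card = s - 1 → (∀ a ∈ A, a ∈ N) →
      (∀ a ∈ A, (w, a) ∈ E) → w ∈ Z := by
    intro w A hcard hAN hAE
    rw [hmemZ w]
    have hsub : A.image (fun a => (w, a)) ⊆ E.filter fun p => p.1 = w ∧ p.2 ∈ N := by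
      intro p hp
      rcases mem_image.1 hp with ⟨a, ha, rfl⟩
      exact mem_filter.2 ⟨hAE a ha, rfl, hAN a ha⟩
    have hc := card_le_card hsub
    rwa [card_image_of_injective _ (fun x y hxy => congrArg Prod.snd hxy), hcard] at hc
  -- the partition of E into three classes
  have e1 := card_filter_add_card_filter_not (s := E) (p := fun p => p.1 ∈ Z)
  have e2 := card_filter_add_card_filter_not
      (s := E.filter fun p => p.1 ∈ Z) (p := fun p => p.2 ∈ N)
  rw [filter_filter, filter_filter] at e2
  -- bound 1 : edges from Z to N
  have hb1 : (s - 1) * Z.card ≤ (E.filter fun p => p.1 ∈ Z ∧ p.2 ∈ N).card := by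
    rw [card_eq_sum_card_fiberwise (f := Prod.fst) (t := Z)
      (fun p hp => (mem_filter.1 hp).2.1)]
    calc (s - 1) * Z.card = ∑ _w ∈ Z, (s - 1) := by rw [sum_const, smul_eq_mul, mul_comm]
    _ ≤ _ := by
        apply sum_le_sum
        intro w hw
        have hwZ : s - 1 ≤ (E.filter fun p => p.1 = w ∧ p.2 ∈ N).card := (hmemZ w).1 hw
        refine le_trans hwZ (card_le_card ?_)
        intro p hp
        rcases mem_filter.1 hp with ⟨hpE, hp1, hp2⟩
        exact mem_filter.2 ⟨mem_filter.2 ⟨hpE, by rw [hp1]; exact hw, hp2⟩, hp1⟩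
  -- bound 2 : edges from Z to the complement of N
  have hb2 : (n - δ) * (t - 1) ≤ (E.filter fun p => p.1 ∈ Z ∧ ¬p.2 ∈ N).card := by
    have hMcard : (univ.filter fun v : Fin n => ¬v ∈ N).card = n - δ := by
      have h4 := card_filter_add_card_filter_not (s := (univ : Finset (Fin n)))
        (p := fun v => v ∈ N)
      have h5 : univ.filter (fun v : Fin n => v ∈ N) = N := by
        ext v; simp
      rw [h5] at h4
      have h6 : (univ : Finset (Fin n)).card = n := by simp
      omega
    rw [card_eq_sum_card_fiberwise (f := Prod.snd) (t := univ.filter fun v : Fin n => ¬v ∈ N)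
      (fun p hp => mem_filter.2 ⟨mem_univ _, (mem_filter.1 hp).2.2⟩)]
    calc (n - δ) * (t - 1) = ∑ _v ∈ univ.filter (fun v : Fin n => ¬v ∈ N), (t - 1) := by
          rw [sum_const, smul_eq_mul, hMcard]
    _ ≤ _ := by
        apply sum_le_sum
        intro v hv
        have hvN : ¬v ∈ N := (mem_filter.1 hv).2
        have hvE : (u₀, v) ∉ E := fun h => hvN ((hmemN v).2 h)
        obtain ⟨W, A, hWcard, hAcard, hAN, hWE, hWA⟩ := hwit v hvE
        have hsub : W.image (fun w => (w, v)) ⊆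
            (E.filter fun p => p.1 ∈ Z ∧ ¬p.2 ∈ N).filter fun p => p.2 = v := by
          intro p hp
          rcases mem_image.1 hp with ⟨w, hw, rfl⟩
          refine mem_filter.2 ⟨mem_filter.2 ⟨hWE w hw, ?_, hvN⟩, rfl⟩
          exact hZof w A hAcard hAN (fun a ha => hWA w hw a ha)
        have hc := card_le_card hsub
        rwa [card_image_of_injective _ (fun x y hxy => congrArg Prod.fst hxy), hWcard] at hc
  -- bound 3 : edges from the complement of Z
  have hb3 : (n - Z.card) * (s - 1) ≤ (E.filter fun p => ¬p.1 ∈ Z).card := by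
    have hMcard : (univ.filter fun w : Fin n => ¬w ∈ Z).card = n - Z.card := by
      have h4 := card_filter_add_card_filter_not (s := (univ : Finset (Fin n)))
        (p := fun w => w ∈ Z)
      have h5 : univ.filter (fun w : Fin n => w ∈ Z) = Z := by
        ext w; simp only [mem_filter, mem_univ, true_and]
      rw [h5] at h4
      have h6 : (univ : Finset (Fin n)).card = n := by simp
      omega
    rw [card_eq_sum_card_fiberwise (f := Prod.fst) (t := univ.filter fun w : Fin n => ¬w ∈ Z)
      (fun p hp => mem_filter.2 ⟨mem_univ _, (mem_filter.1 hp).2⟩)]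
    calc (n - Z.card) * (s - 1)
        = ∑ _w ∈ univ.filter (fun w : Fin n => ¬w ∈ Z), (s - 1) := by
          rw [sum_const, smul_eq_mul, hMcard]
    _ ≤ _ := by
        apply sum_le_sum
        intro w hw
        have hwZ : ¬w ∈ Z := (mem_filter.1 hw).2
        have hsub : E.filter (fun p => p.1 = w) ⊆
            (E.filter fun p => ¬p.1 ∈ Z).filter fun p => p.1 = w := by
          intro p hp
          rcases mem_filter.1 hp with ⟨hpE, hp1⟩
          exact mem_filter.2 ⟨mem_filter.2 ⟨hpE, by rw [hp1]; exact hwZ⟩, hp1⟩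
        have hc := card_le_card hsub
        have hdeg : δ ≤ (E.filter fun p => p.1 = w).card := hminL w
        omega
  -- assemble
  have hfin : (s - 1) * Z.card + (n - δ) * (t - 1) + (n - Z.card) * (s - 1) ≤ E.card := by
    have := add_le_add (add_le_add hb1 hb2) hb3
    omega
  have hZn : Z.card ≤ n := by
    have := card_le_card (subset_univ Z)
    simpa using this
  have hδn : δ ≤ n := by omega
  have ht1 : 1 ≤ t := by omega
  zify [hs, ht1, hδn, hZn] at hfin
  have hgoal : ((s + t - 2 : ℕ) : ℤ) = (s : ℤ) + t - 2 := by omega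
  rw [hgoal]
  have hδ2 : (δ : ℤ) ≤ (t : ℤ) - 2 := by omega
  have htn' : (t : ℤ) ≤ (n : ℤ) := by exact_mod_cast htn
  have hs' : (1 : ℤ) ≤ (s : ℤ) := by exact_mod_cast hs
  have hst' : (s : ℤ) ≤ (t : ℤ) := by exact_mod_cast hst
  have hδ0 : (0 : ℤ) ≤ (δ : ℤ) := by positivity
  have hprod : ((t : ℤ) - 1) * δ ≤ ((s : ℤ) + t - 2) * ((s : ℤ) + t - 2) := by
    have h1 : (t : ℤ) - 1 ≤ (s : ℤ) + t - 2 := by linarith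
    have h2 : (δ : ℤ) ≤ (s : ℤ) + t - 2 := by linarith
    have h3 : (0 : ℤ) ≤ (t : ℤ) - 1 := by linarith
    exact mul_le_mul h1 h2 hδ0 (by linarith)
  nlinarith [hfin, hprod]

lemma mem_swapImage {n : ℕ} (E : Finset (Fin n × Fin n)) (p : Fin n × Fin n) :
    p ∈ E.image Prod.swap ↔ p.swap ∈ E := by
  constructor
  · intro h
    rcases Finset.mem_image.1 h with ⟨q, hq, rfl⟩
    simpa using hq
  · intro h
    exact Finset.mem_image.2 ⟨p.swap, h, by simp⟩

lemma containsK_swap {n : ℕ} (E : Finset (Fin n × Fin n)) (a b : ℕ) :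
    containsK (E.image Prod.swap) a b ↔ containsK E b a := by
  constructor
  · rintro ⟨S, T, hS, hT, h⟩
    refine ⟨T, S, hT, hS, fun u hu v hv => ?_⟩
    have h2 := h v hv u hu
    rwa [mem_swapImage] at h2
  · rintro ⟨S, T, hS, hT, h⟩
    refine ⟨T, S, hT, hS, fun u hu v hv => ?_⟩
    rw [mem_swapImage]
    exact h v hv u hu

lemma insert_swapImage {n : ℕ} (E : Finset (Fin n × Fin n)) (u v : Fin n) :
    insert (u, v) (E.image Prod.swap) = (insert (v, u) E).image Prod.swap := by
  rw [Finset.image_insert]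
  rfl

lemma saturated_swap {n : ℕ} (s t : ℕ) (E : Finset (Fin n × Fin n))
    (h : Saturated s t E) : Saturated s t (E.image Prod.swap) := by
  constructor
  · rintro (h1 | h1)
    · exact h.1 (Or.inr ((containsK_swap E s t).1 h1))
    · exact h.1 (Or.inl ((containsK_swap E t s).1 h1))
  · intro u v huv
    have huv' : (v, u) ∉ E := by
      intro hE
      exact huv ((mem_swapImage E (u, v)).2 hE)
    rcases h.2 v u huv' with h2 | h2
    · right
      rw [insert_swapImage]
      exact (containsK_swap (insert (v, u) E) t s).2 h2
    · left
      rw [insert_swapImage]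
      exact (containsK_swap (insert (v, u) E) s t).2 h2

lemma degL_swap {n : ℕ} (E : Finset (Fin n × Fin n)) (u : Fin n) :
    degL (E.image Prod.swap) u = degR E u := by
  have h : (E.image Prod.swap).filter (fun p => p.1 = u) =
      (E.filter fun p => p.2 = u).image Prod.swap := by
    ext p
    constructor
    · intro hp
      rcases Finset.mem_filter.1 hp with ⟨hp1, hp2⟩
      rw [mem_swapImage] at hp1
      exact Finset.mem_image.2 ⟨p.swap, Finset.mem_filter.2 ⟨hp1, hp2⟩, Prod.swap_swap p⟩
    · intro hp
      rcases Finset.mem_image.1 hp with ⟨q, hq, rfl⟩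
      rcases Finset.mem_filter.1 hq with ⟨hq1, hq2⟩
      refine Finset.mem_filter.2 ⟨?_, hq2⟩
      rw [mem_swapImage]
      simpa using hq1
  unfold degL degR
  rw [h, Finset.card_image_of_injective _ Prod.swap_injective]

theorem stmt1 (n s t δ : ℕ) (hs : 1 ≤ s) (hst : s ≤ t) (htn : t ≤ n)
    (E : Finset (Fin n × Fin n)) (hsat : Saturated s t E)
    (hminL : ∀ u : Fin n, δ ≤ degL E u) (hminR : ∀ v : Fin n, δ ≤ degR E v)
    (hatt : (∃ u : Fin n, degL E u = δ) ∨ (∃ v : Fin n, degR E v = δ))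
    (hδ : δ < t - 1) :
    (n : ℤ) * (s + t - 2 : ℕ) - ((s + t - 2 : ℕ) : ℤ) ^ 2 ≤ (E.card : ℤ) := by
  rcases hatt with ⟨u, hu⟩ | ⟨v, hv⟩
  · exact stmt1_core s t δ hs hst htn E hsat hminL u hu hδ
  · have hsat' : Saturated s t (E.image Prod.swap) := saturated_swap s t E hsat
    have hminL' : ∀ u : Fin n, δ ≤ degL (E.image Prod.swap) u := by
      intro u; rw [degL_swap]; exact hminR u
    have hv' : degL (E.image Prod.swap) v = δ := by rw [degL_swap]; exact hv
    have h := stmt1_core s t δ hs hst htn (E.image Prod.swap) hsat' hminL' v hv' hδ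
    rwa [Finset.card_image_of_injective _ Prod.swap_injective] at h
end

section
/- If a K_{s,t}-saturated n-by-n bipartite graph has minimum degree δ < t-1, then in fact s-1 ≤ δ < t-1. -/
open Finset

lemma degL_ge {n : ℕ} (E : Finset (Fin n × Fin n)) (u v : Fin n) (T : Finset (Fin n))
    (hT : ∀ y ∈ T, (u, y) ∈ insert (u, v) E) : T.card - 1 ≤ degL E u := by
  have h1 : (T.erase v).card ≤ degL E u := by
    apply Finset.card_le_card_of_injOn (fun y => (u, y))
    · intro y hy
      have hyv := Finset.ne_of_mem_erase hy
      have := hT y (Finset.mem_of_mem_erase hy)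
      rcases Finset.mem_insert.1 this with heq | hmem
      · exact absurd (Prod.ext_iff.1 heq).2 hyv
      · simp [Finset.mem_filter, hmem]
    · intro a _ b _ h
      exact (Prod.ext_iff.1 h).2
  calc T.card - 1 ≤ (T.erase v).card := Finset.pred_card_le_card_erase
    _ ≤ degL E u := h1

lemma degR_ge {n : ℕ} (E : Finset (Fin n × Fin n)) (u v : Fin n) (S : Finset (Fin n))
    (hS : ∀ x ∈ S, (x, v) ∈ insert (u, v) E) : S.card - 1 ≤ degR E v := by
  have h1 : (S.erase u).card ≤ degR E v := by
    apply Finset.card_le_card_of_injOn (fun x => (x, v))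
    · intro x hx
      have hxu := Finset.ne_of_mem_erase hx
      have := hS x (Finset.mem_of_mem_erase hx)
      rcases Finset.mem_insert.1 this with heq | hmem
      · exact absurd (Prod.ext_iff.1 heq).1 hxu
      · simp [Finset.mem_filter, hmem]
    · intro a _ b _ h
      exact (Prod.ext_iff.1 h).1
  calc S.card - 1 ≤ (S.erase u).card := Finset.pred_card_le_card_erase
    _ ≤ degR E v := h1

lemma copy_uses_edge {n s t : ℕ} {E : Finset (Fin n × Fin n)} {u v : Fin n}
    (hsat : Saturated s t E) (S T : Finset (Fin n)) (hS : S.card = s) (hT : T.card = t)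
    (hall : ∀ x ∈ S, ∀ y ∈ T, (x, y) ∈ insert (u, v) E) : u ∈ S ∧ v ∈ T := by
  by_contra h
  apply hsat.1
  left
  refine ⟨S, T, hS, hT, fun x hx y hy => ?_⟩
  rcases Finset.mem_insert.1 (hall x hx y hy) with heq | hmem
  · simp only [Prod.mk.injEq] at heq
    exact absurd ⟨heq.1 ▸ hx, heq.2 ▸ hy⟩ h
  · exact hmem

lemma copy_uses_edge' {n s t : ℕ} {E : Finset (Fin n × Fin n)} {u v : Fin n}
    (hsat : Saturated s t E) (S T : Finset (Fin n)) (hS : S.card = t) (hT : T.card = s)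
    (hall : ∀ x ∈ S, ∀ y ∈ T, (x, y) ∈ insert (u, v) E) : u ∈ S ∧ v ∈ T := by
  by_contra h
  apply hsat.1
  right
  refine ⟨S, T, hS, hT, fun x hx y hy => ?_⟩
  rcases Finset.mem_insert.1 (hall x hx y hy) with heq | hmem
  · simp only [Prod.mk.injEq] at heq
    exact absurd ⟨heq.1 ▸ hx, heq.2 ▸ hy⟩ h
  · exact hmem

theorem stmt2 (n s t δ : ℕ) (hs : 1 ≤ s) (hst : s ≤ t) (htn : t ≤ n)
    (E : Finset (Fin n × Fin n)) (hsat : Saturated s t E)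
    (hminL : ∀ u : Fin n, δ ≤ degL E u) (hminR : ∀ v : Fin n, δ ≤ degR E v)
    (hatt : (∃ u : Fin n, degL E u = δ) ∨ (∃ v : Fin n, degR E v = δ))
    (hδ : δ < t - 1) :
    s - 1 ≤ δ := by
  have hδn : δ < n := by omega
  rcases hatt with ⟨u, hu⟩ | ⟨v, hv⟩
  · -- left attainer
    have himg : ((E.filter fun p => p.1 = u).image Prod.snd).card < n := by
      calc ((E.filter fun p => p.1 = u).image Prod.snd).card
          ≤ (E.filter fun p => p.1 = u).card := Finset.card_image_le
        _ = δ := hu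
        _ < n := hδn
    obtain ⟨v, hvmem⟩ : ∃ v : Fin n, v ∉ (E.filter fun p => p.1 = u).image Prod.snd := by
      by_contra h
      push_neg at h
      have : (Finset.univ : Finset (Fin n)) ⊆ (E.filter fun p => p.1 = u).image Prod.snd :=
        fun x _ => h x
      have := Finset.card_le_card this
      simp at this
      omega
    have hne : (u, v) ∉ E := by
      intro hmem
      exact hvmem (Finset.mem_image.2 ⟨(u, v), Finset.mem_filter.2 ⟨hmem, rfl⟩, rfl⟩)
    rcases hsat.2 u v hne with ⟨S, T, hS, hT, hall⟩ | ⟨S, T, hS, hT, hall⟩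
    · obtain ⟨huS, hvT⟩ := copy_uses_edge hsat S T hS hT hall
      have := degL_ge E u v T (fun y hy => hall u huS y hy)
      rw [hT, hu] at this
      omega
    · obtain ⟨huS, hvT⟩ := copy_uses_edge' hsat S T hS hT hall
      have := degL_ge E u v T (fun y hy => hall u huS y hy)
      rw [hT, hu] at this
      omega
  · -- right attainer
    have himg : ((E.filter fun p => p.2 = v).image Prod.fst).card < n := by
      calc ((E.filter fun p => p.2 = v).image Prod.fst).card
          ≤ (E.filter fun p => p.2 = v).card := Finset.card_image_le
        _ = δ := hv
        _ < n := hδn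
    obtain ⟨u, humem⟩ : ∃ u : Fin n, u ∉ (E.filter fun p => p.2 = v).image Prod.fst := by
      by_contra h
      push_neg at h
      have : (Finset.univ : Finset (Fin n)) ⊆ (E.filter fun p => p.2 = v).image Prod.fst :=
        fun x _ => h x
      have := Finset.card_le_card this
      simp at this
      omega
    have hne : (u, v) ∉ E := by
      intro hmem
      exact humem (Finset.mem_image.2 ⟨(u, v), Finset.mem_filter.2 ⟨hmem, rfl⟩, rfl⟩)
    rcases hsat.2 u v hne with ⟨S, T, hS, hT, hall⟩ | ⟨S, T, hS, hT, hall⟩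
    · obtain ⟨huS, hvT⟩ := copy_uses_edge hsat S T hS hT hall
      have := degR_ge E u v S (fun x hx => hall x hx v hvT)
      rw [hS, hv] at this
      omega
    · obtain ⟨huS, hvT⟩ := copy_uses_edge' hsat S T hS hT hall
      have := degR_ge E u v S (fun x hx => hall x hx v hvT)
      rw [hS, hv] at this
      omega
end

section
/- Every K_{2,3}-saturated n-by-n bipartite graph with n ≥ 4 contains at least 3n-2 edges. -/
open Finset

namespace K23

variable {n : ℕ}

/-- rights adjacent to left u -/
def NL (E : Finset (Fin n × Fin n)) (u : Fin n) : Finset (Fin n) :=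
  univ.filter (fun v => (u, v) ∈ E)

/-- lefts adjacent to right v -/
def NR (E : Finset (Fin n × Fin n)) (v : Fin n) : Finset (Fin n) :=
  univ.filter (fun u => (u, v) ∈ E)

@[simp] lemma mem_NL {E : Finset (Fin n × Fin n)} {u v : Fin n} :
    v ∈ NL E u ↔ (u, v) ∈ E := by simp [NL]

@[simp] lemma mem_NR {E : Finset (Fin n × Fin n)} {u v : Fin n} :
    u ∈ NR E v ↔ (u, v) ∈ E := by simp [NR]

/-- Saturation characterization -/
def SatChar (E : Finset (Fin n × Fin n)) : Prop :=
  ∀ u v : Fin n, (u, v) ∉ E →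
    (∃ u', u' ≠ u ∧ (u', v) ∈ E ∧ 2 ≤ ((NL E u) ∩ (NL E u')).card) ∨
    (∃ v', v' ≠ v ∧ (u, v') ∈ E ∧ 2 ≤ ((NR E v) ∩ (NR E v')).card)

def CodegL (E : Finset (Fin n × Fin n)) : Prop :=
  ∀ u u' : Fin n, u ≠ u' → ((NL E u) ∩ (NL E u')).card ≤ 2

def CodegR (E : Finset (Fin n × Fin n)) : Prop :=
  ∀ v v' : Fin n, v ≠ v' → ((NR E v) ∩ (NR E v')).card ≤ 2

lemma codegL_of_free {E : Finset (Fin n × Fin n)}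
    (h : ¬ containsK E 2 3) : CodegL E := by
  intro u u' hne
  by_contra hc
  push_neg at hc
  obtain ⟨T, hTsub, hTcard⟩ := Finset.exists_subset_card_eq hc
  exact h ⟨{u, u'}, T, card_pair hne, hTcard, by
    intro x hx v hv
    have hv' := hTsub hv
    simp only [mem_inter, mem_NL] at hv'
    rcases mem_insert.1 hx with rfl | hx
    · exact hv'.1
    · rcases mem_singleton.1 hx with rfl
      exact hv'.2⟩

lemma codegR_of_free {E : Finset (Fin n × Fin n)}
    (h : ¬ containsK E 3 2) : CodegR E := by
  intro v v' hne
  by_contra hc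
  push_neg at hc
  obtain ⟨S, hSsub, hScard⟩ := Finset.exists_subset_card_eq hc
  exact h ⟨S, {v, v'}, hScard, card_pair hne, by
    intro x hx w hw
    have hx' := hSsub hx
    simp only [mem_inter, mem_NR] at hx'
    rcases mem_insert.1 hw with rfl | hw
    · exact hx'.1
    · rcases mem_singleton.1 hw with rfl
      exact hx'.2⟩

lemma exists_other {α : Type*} [DecidableEq α] {S : Finset α} (hS : S.card = 2) {u : α}
    (hu : u ∈ S) : ∃ u', u' ∈ S ∧ u' ≠ u := by
  obtain ⟨x, y, hxy, rfl⟩ := Finset.card_eq_two.1 hS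
  rcases Finset.mem_insert.1 hu with rfl | hu
  · exact ⟨y, Finset.mem_insert_of_mem (Finset.mem_singleton_self _), fun h => hxy h.symm⟩
  · rw [Finset.mem_singleton] at hu
    subst hu
    exact ⟨x, Finset.mem_insert_self _ _, hxy⟩

lemma satChar {E : Finset (Fin n × Fin n)} (hsat : Saturated 2 3 E) : SatChar E := by
  intro u v huv
  rcases hsat.2 u v huv with ⟨S, T, hS, hT, hall⟩ | ⟨S, T, hS, hT, hall⟩
  · -- K_{2,3}
    have huS : u ∈ S := by
      by_contra hu
      exact hsat.1 (Or.inl ⟨S, T, hS, hT, fun x hx w hw => by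
        have := hall x hx w hw
        rcases mem_insert.1 this with h | h
        · exact absurd (by rw [Prod.mk.injEq] at h; exact h.1 ▸ hx) hu
        · exact h⟩)
    have hvT : v ∈ T := by
      by_contra hv
      exact hsat.1 (Or.inl ⟨S, T, hS, hT, fun x hx w hw => by
        have := hall x hx w hw
        rcases mem_insert.1 this with h | h
        · exact absurd (by rw [Prod.mk.injEq] at h; exact h.2 ▸ hw) hv
        · exact h⟩)
    obtain ⟨u', hu'S, hu'ne⟩ := exists_other hS huS
    left
    have hedge : ∀ s ∈ S, ∀ t ∈ T, s ≠ u ∨ t ≠ v → (s, t) ∈ E := by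
      intro s hs t ht hor
      have := hall s hs t ht
      rcases mem_insert.1 this with h | h
      · rw [Prod.mk.injEq] at h
        rcases hor with h1 | h1 <;> [exact absurd h.1 h1; exact absurd h.2 h1]
      · exact h
    refine ⟨u', hu'ne, hedge u' hu'S v hvT (Or.inl hu'ne), ?_⟩
    have hsub : T \ {v} ⊆ (NL E u) ∩ (NL E u') := by
      intro t ht
      rw [mem_sdiff, mem_singleton] at ht
      rw [mem_inter, mem_NL, mem_NL]
      exact ⟨hedge u huS t ht.1 (Or.inr ht.2), hedge u' hu'S t ht.1 (Or.inr ht.2)⟩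
    calc 2 = (T \ {v}).card := by
              rw [card_sdiff_of_subset (by simpa using hvT)]
              simp [hT]
      _ ≤ _ := card_le_card hsub
  · -- K_{3,2}
    have huS : u ∈ S := by
      by_contra hu
      exact hsat.1 (Or.inr ⟨S, T, hS, hT, fun x hx w hw => by
        have := hall x hx w hw
        rcases mem_insert.1 this with h | h
        · exact absurd (by rw [Prod.mk.injEq] at h; exact h.1 ▸ hx) hu
        · exact h⟩)
    have hvT : v ∈ T := by
      by_contra hv
      exact hsat.1 (Or.inr ⟨S, T, hS, hT, fun x hx w hw => by
        have := hall x hx w hw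
        rcases mem_insert.1 this with h | h
        · exact absurd (by rw [Prod.mk.injEq] at h; exact h.2 ▸ hw) hv
        · exact h⟩)
    obtain ⟨v', hv'T, hv'ne⟩ := exists_other hT hvT
    right
    have hedge : ∀ s ∈ S, ∀ t ∈ T, s ≠ u ∨ t ≠ v → (s, t) ∈ E := by
      intro s hs t ht hor
      have := hall s hs t ht
      rcases mem_insert.1 this with h | h
      · rw [Prod.mk.injEq] at h
        rcases hor with h1 | h1 <;> [exact absurd h.1 h1; exact absurd h.2 h1]
      · exact h
    refine ⟨v', hv'ne, hedge u huS v' hv'T (Or.inr hv'ne), ?_⟩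
    have hsub : S \ {u} ⊆ (NR E v) ∩ (NR E v') := by
      intro s hs
      rw [mem_sdiff, mem_singleton] at hs
      rw [mem_inter, mem_NR, mem_NR]
      exact ⟨hedge s hs.1 v hvT (Or.inl hs.2), hedge s hs.1 v' hv'T (Or.inl hs.2)⟩
    calc 2 = (S \ {u}).card := by
              rw [card_sdiff_of_subset (by simpa using huS)]
              simp [hS]
      _ ≤ _ := card_le_card hsub

end K23
-- counting infrastructure (to append)
namespace K23
variable {n : ℕ}

lemma NL_inter_eq_filter (E : Finset (Fin n × Fin n)) (x : Fin n) (B : Finset (Fin n)) :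
    (NL E x) ∩ B = B.filter (fun v => (x, v) ∈ E) := by
  ext v; simp [mem_NL, and_comm]

lemma NR_inter_eq_filter (E : Finset (Fin n × Fin n)) (v : Fin n) (A : Finset (Fin n)) :
    (NR E v) ∩ A = A.filter (fun x => (x, v) ∈ E) := by
  ext x; simp [mem_NR, and_comm]

/-- double counting of edges between A and B -/
lemma sum_NL_inter (E : Finset (Fin n × Fin n)) (A B : Finset (Fin n)) :
    ∑ x ∈ A, ((NL E x) ∩ B).card = ∑ v ∈ B, ((NR E v) ∩ A).card := by
  simp only [NL_inter_eq_filter, NR_inter_eq_filter, card_filter]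
  exact Finset.sum_comm

lemma card_eq_sum_NL (E : Finset (Fin n × Fin n)) :
    E.card = ∑ u : Fin n, (NL E u).card := by
  rw [Finset.card_eq_sum_card_fiberwise (f := Prod.fst) (t := univ) (fun p _ => mem_univ _)]
  refine Finset.sum_congr rfl (fun u _ => ?_)
  refine Finset.card_bij (fun p _ => p.2) ?_ ?_ ?_
  · intro p hp
    simp only [mem_filter] at hp
    rw [mem_NL]
    have : (p.1, p.2) = (u, p.2) := by rw [hp.2]
    rw [← this]
    exact hp.1
  · intro p hp q hq h
    simp only [mem_filter] at hp hq
    exact Prod.ext (hp.2.trans hq.2.symm) h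
  · intro v hv
    exact ⟨(u, v), by simp [mem_NL.1 hv], rfl⟩

/-- swap graph -/
def sw (E : Finset (Fin n × Fin n)) : Finset (Fin n × Fin n) := E.image Prod.swap

lemma mem_sw {E : Finset (Fin n × Fin n)} {v u : Fin n} :
    (v, u) ∈ sw E ↔ (u, v) ∈ E := by
  constructor
  · intro h
    obtain ⟨p, hp, hpe⟩ := Finset.mem_image.1 h
    have : p = (u, v) := by
      cases p
      simp only [Prod.swap_prod_mk, Prod.mk.injEq] at hpe
      simp [hpe.1, hpe.2]
    exact this ▸ hp
  · intro h
    exact Finset.mem_image.2 ⟨(u, v), h, rfl⟩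

lemma card_sw (E : Finset (Fin n × Fin n)) : (sw E).card = E.card :=
  Finset.card_image_of_injective _ Prod.swap_injective

@[simp] lemma NL_sw (E : Finset (Fin n × Fin n)) (v : Fin n) : NL (sw E) v = NR E v := by
  ext u; simp [mem_NL, mem_NR, mem_sw]

@[simp] lemma NR_sw (E : Finset (Fin n × Fin n)) (u : Fin n) : NR (sw E) u = NL E u := by
  ext v; simp [mem_NL, mem_NR, mem_sw]

lemma satChar_sw {E : Finset (Fin n × Fin n)} (h : SatChar E) : SatChar (sw E) := by
  intro v u hvu
  rw [mem_sw] at hvu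
  rcases h u v hvu with ⟨u', h1, h2, h3⟩ | ⟨v', h1, h2, h3⟩
  · right
    exact ⟨u', h1, mem_sw.2 h2, by simpa using h3⟩
  · left
    exact ⟨v', h1, mem_sw.2 h2, by simpa using h3⟩

lemma codegL_sw {E : Finset (Fin n × Fin n)} (h : CodegR E) : CodegL (sw E) := by
  intro v v' hne; simpa using h v v' hne

lemma codegR_sw {E : Finset (Fin n × Fin n)} (h : CodegL E) : CodegR (sw E) := by
  intro u u' hne; simpa using h u u' hne

end K23
-- L1, L2
namespace K23
variable {n : ℕ}

lemma degL_pos {E : Finset (Fin n × Fin n)} (hn : 1 ≤ n) (hchar : SatChar E)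
    (u : Fin n) : 1 ≤ (NL E u).card := by
  rw [Nat.one_le_iff_ne_zero, Ne, Finset.card_eq_zero]
  intro hemp
  have hv : (u, (⟨0, hn⟩ : Fin n)) ∉ E := by
    intro h
    have : (⟨0, hn⟩ : Fin n) ∈ NL E u := mem_NL.2 h
    simp [hemp] at this
  rcases hchar u _ hv with ⟨u', _, _, hcd⟩ | ⟨v', _, hE, _⟩
  · have h0 : (NL E u ∩ NL E u').card = 0 := by rw [hemp]; simp
    omega
  · have : v' ∈ NL E u := mem_NL.2 hE
    simp [hemp] at this

/-- A degree-1 left vertex forces ≥ 3n-2 edges. -/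
lemma deg_one_case {E : Finset (Fin n × Fin n)} (hn : 1 ≤ n) (hchar : SatChar E)
    (hL1 : ∀ x, 1 ≤ (NL E x).card) (u w : Fin n) (h1 : NL E u = {w}) :
    3 * n ≤ E.card + 2 := by
  classical
  set Y := NR E w \ {u} with hY
  have huw : u ∈ NR E w := by
    rw [mem_NR, ← mem_NL, h1]
    exact mem_singleton_self _
  have hcov : ∀ v, v ≠ w → 2 ≤ ((NR E v) ∩ Y).card := by
    intro v hvw
    have huv : (u, v) ∉ E := by
      intro h
      have : v ∈ NL E u := mem_NL.2 h
      rw [h1, mem_singleton] at this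
      exact hvw this
    rcases hchar u v huv with ⟨u', _, _, hcd⟩ | ⟨v', _, hE, hcd⟩
    · have h2 : (NL E u ∩ NL E u').card ≤ 1 := by
        refine le_trans (card_le_card (Finset.inter_subset_left : NL E u ∩ NL E u' ⊆ _)) ?_
        rw [h1]
        simp
      omega
    · have hv'w : v' = w := by
        have : v' ∈ NL E u := mem_NL.2 hE
        rwa [h1, mem_singleton] at this
      subst hv'w
      refine le_trans hcd (card_le_card ?_)
      intro x hx
      rw [mem_inter] at hx ⊢
      refine ⟨hx.1, ?_⟩
      rw [hY, mem_sdiff, mem_singleton]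
      refine ⟨hx.2, ?_⟩
      intro hxu
      subst hxu
      exact huv (mem_NR.1 hx.1)
  -- counting
  have huY : u ∉ Y := by simp [hY]
  set A : Finset (Fin n) := insert u Y with hA
  have hsplit : ∑ x ∈ univ \ A, (NL E x).card + ∑ x ∈ A, (NL E x).card
      = ∑ x : Fin n, (NL E x).card := Finset.sum_sdiff (subset_univ A)
  have hAsum : ∑ x ∈ A, (NL E x).card = 1 + ∑ x ∈ Y, (NL E x).card := by
    rw [hA, Finset.sum_insert huY, h1]
    simp
  have hYsum : ∑ x ∈ Y, (NL E x).card = ∑ v : Fin n, ((NR E v) ∩ Y).card := by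
    have := sum_NL_inter E Y univ
    simpa using this
  have hWsplit : ∑ v ∈ univ \ {w}, ((NR E v) ∩ Y).card + ∑ v ∈ ({w} : Finset (Fin n)), ((NR E v) ∩ Y).card
      = ∑ v : Fin n, ((NR E v) ∩ Y).card := Finset.sum_sdiff (subset_univ _)
  have hw1 : ∑ v ∈ ({w} : Finset (Fin n)), ((NR E v) ∩ Y).card = Y.card := by
    rw [Finset.sum_singleton, Finset.inter_eq_right.2 (by rw [hY]; exact sdiff_subset)]
  have hw2 : 2 * (n - 1) ≤ ∑ v ∈ univ \ {w}, ((NR E v) ∩ Y).card := by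
    calc 2 * (n - 1) = ∑ _v ∈ univ \ {w}, 2 := by
          rw [Finset.sum_const, smul_eq_mul, card_sdiff_of_subset (subset_univ _), card_univ,
            Fintype.card_fin]
          simp [mul_comm]
      _ ≤ _ := Finset.sum_le_sum (fun v hv => hcov v (by
          rw [mem_sdiff, mem_singleton] at hv; exact hv.2))
  have hrest : (univ \ A).card ≤ ∑ x ∈ univ \ A, (NL E x).card := by
    calc (univ \ A).card = ∑ _x ∈ univ \ A, 1 := by simp
      _ ≤ _ := Finset.sum_le_sum (fun x _ => hL1 x)
  have hcardA : A.card = Y.card + 1 := by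
    rw [hA, Finset.card_insert_of_notMem huY]
  have hcardrest : (univ \ A).card + A.card = n := by
    have h := card_le_univ A
    rw [card_sdiff_of_subset (subset_univ _)]
    simp only [card_univ, Fintype.card_fin] at h ⊢
    omega
  have hE : E.card = ∑ x : Fin n, (NL E x).card := card_eq_sum_NL E
  omega

end K23
-- L3 : no-z case
namespace K23
variable {n : ℕ}

lemma exists_ne_of_two_le {α : Type*} [DecidableEq α] {s : Finset α} (h : 2 ≤ s.card)
    (u : α) : ∃ y ∈ s, y ≠ u := by
  by_contra hc
  push_neg at hc
  have hsub : s ⊆ {u} := fun y hy => Finset.mem_singleton.2 (hc y hy)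
  have := Finset.card_le_card hsub
  simp at this
  omega

lemma no_z_case {E : Finset (Fin n × Fin n)} (hchar : SatChar E)
    (hL2 : ∀ x, 2 ≤ (NL E x).card) (hR2 : ∀ v, 2 ≤ (NR E v).card)
    (u a b : Fin n) (hne : a ≠ b) (hab : NL E u = {a, b})
    (hz : NR E a ∩ NR E b = {u}) :
    3 * n ≤ E.card + 2 := by
  classical
  have hua : u ∈ NR E a := by
    rw [mem_NR, ← mem_NL, hab]; exact mem_insert_self _ _
  have hub : u ∈ NR E b := by
    rw [mem_NR, ← mem_NL, hab]; exact mem_insert_of_mem (mem_singleton_self _)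
  set X : Finset (Fin n) := (NR E a ∪ NR E b) \ {u} with hX
  have hmiss : ∀ v : Fin n, v ≠ a → v ≠ b → (u, v) ∉ E := by
    intro v hva hvb h
    have : v ∈ NL E u := mem_NL.2 h
    rw [hab] at this
    rcases mem_insert.1 this with h' | h'
    · exact hva h'
    · exact hvb (mem_singleton.1 h')
  have hcov : ∀ v : Fin n, v ≠ a → v ≠ b →
      2 ≤ ((NR E v) ∩ (NR E a)).card ∨ 2 ≤ ((NR E v) ∩ (NR E b)).card := by
    intro v hva hvb
    rcases hchar u v (hmiss v hva hvb) with ⟨u', hneu, hEu, hcd⟩ | ⟨v', hnev, hEv, hcd⟩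
    · exfalso
      have hsub : NL E u ∩ NL E u' ⊆ {a, b} := by rw [hab]; exact inter_subset_left
      have heq : NL E u ∩ NL E u' = {a, b} :=
        Finset.eq_of_subset_of_card_le hsub (by rw [card_pair hne]; exact hcd)
      have hau' : a ∈ NL E u' := by
        have : a ∈ NL E u ∩ NL E u' := by rw [heq]; exact mem_insert_self _ _
        exact (mem_inter.1 this).2
      have hbu' : b ∈ NL E u' := by
        have : b ∈ NL E u ∩ NL E u' := by
          rw [heq]; exact mem_insert_of_mem (mem_singleton_self _)
        exact (mem_inter.1 this).2
      have : u' ∈ NR E a ∩ NR E b := by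
        rw [mem_inter, mem_NR, mem_NR]
        exact ⟨mem_NL.1 hau', mem_NL.1 hbu'⟩
      rw [hz, mem_singleton] at this
      exact hneu this
    · have : v' ∈ NL E u := mem_NL.2 hEv
      rw [hab] at this
      rcases mem_insert.1 this with h' | h'
      · left; rw [← h']; exact hcd
      · right; rw [← mem_singleton.1 h']; exact hcd
  have hcovX : ∀ v : Fin n, v ≠ a → v ≠ b → 2 ≤ ((NR E v) ∩ X).card := by
    intro v hva hvb
    have hsu : u ∉ NR E v := by
      rw [mem_NR]; exact fun h => hmiss v hva hvb h
    rcases hcov v hva hvb with h | h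
    · refine le_trans h (card_le_card ?_)
      intro x hx
      rw [mem_inter] at hx ⊢
      refine ⟨hx.1, ?_⟩
      rw [hX, mem_sdiff, mem_singleton]
      exact ⟨mem_union_left _ hx.2, fun h' => hsu (h' ▸ hx.1)⟩
    · refine le_trans h (card_le_card ?_)
      intro x hx
      rw [mem_inter] at hx ⊢
      refine ⟨hx.1, ?_⟩
      rw [hX, mem_sdiff, mem_singleton]
      exact ⟨mem_union_right _ hx.2, fun h' => hsu (h' ▸ hx.1)⟩
  -- counting
  have huX : u ∉ X := by simp [hX]
  set P : Finset (Fin n) := univ \ insert u X with hP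
  have hsplit : ∑ x ∈ P, (NL E x).card + ∑ x ∈ insert u X, (NL E x).card
      = ∑ x : Fin n, (NL E x).card := Finset.sum_sdiff (subset_univ _)
  have hAsum : ∑ x ∈ insert u X, (NL E x).card = 2 + ∑ x ∈ X, (NL E x).card := by
    rw [Finset.sum_insert huX, hab, card_pair hne]
  have hXsplit : ∀ x ∈ X, (NL E x).card
      = ((NL E x) ∩ {a, b}).card + ((NL E x) ∩ (univ \ {a, b})).card := by
    intro x _
    have hsd : NL E x \ ({a, b} : Finset (Fin n)) = NL E x ∩ (univ \ {a, b}) := by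
      ext w
      simp only [mem_sdiff, mem_inter, mem_univ, true_and]
    rw [← Finset.card_inter_add_card_sdiff (NL E x) ({a, b} : Finset (Fin n)), hsd]
  have hX1 : ∀ x ∈ X, 1 ≤ ((NL E x) ∩ {a, b}).card := by
    intro x hx
    rw [hX, mem_sdiff] at hx
    rcases mem_union.1 hx.1 with h | h
    · exact card_pos.2 ⟨a, mem_inter.2 ⟨mem_NL.2 (mem_NR.1 h), mem_insert_self _ _⟩⟩
    · exact card_pos.2 ⟨b, mem_inter.2 ⟨mem_NL.2 (mem_NR.1 h),
        mem_insert_of_mem (mem_singleton_self _)⟩⟩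
  have hX2 : ∑ x ∈ X, ((NL E x) ∩ (univ \ {a, b})).card
      = ∑ v ∈ univ \ {a, b}, ((NR E v) ∩ X).card := sum_NL_inter E X _
  have hcard_ab : (univ \ ({a, b} : Finset (Fin n))).card + 2 = n := by
    rw [card_sdiff_of_subset (subset_univ _), card_pair hne]
    simp only [card_univ, Fintype.card_fin]
    have : ({a, b} : Finset (Fin n)).card ≤ n := by
      have := card_le_univ ({a, b} : Finset (Fin n))
      simpa using this
    rw [card_pair hne] at this
    omega
  have hX2' : 2 * ((univ \ ({a, b} : Finset (Fin n))).card)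
      ≤ ∑ v ∈ univ \ {a, b}, ((NR E v) ∩ X).card := by
    calc 2 * ((univ \ ({a, b} : Finset (Fin n))).card)
        = ∑ _v ∈ univ \ ({a, b} : Finset (Fin n)), 2 := by
          rw [Finset.sum_const, smul_eq_mul, mul_comm]
      _ ≤ _ := Finset.sum_le_sum (fun v hv => by
          rw [mem_sdiff, mem_insert, mem_singleton] at hv
          push_neg at hv
          exact hcovX v hv.2.1 hv.2.2)
  have hXsum : X.card + ∑ v ∈ univ \ {a, b}, ((NR E v) ∩ X).card
      ≤ ∑ x ∈ X, (NL E x).card := by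
    calc X.card + ∑ v ∈ univ \ {a, b}, ((NR E v) ∩ X).card
        = X.card + ∑ x ∈ X, ((NL E x) ∩ (univ \ {a, b})).card := by rw [hX2]
      _ = ∑ x ∈ X, (1 + ((NL E x) ∩ (univ \ {a, b})).card) := by
          rw [Finset.sum_add_distrib, Finset.sum_const, smul_eq_mul, mul_one]
      _ ≤ ∑ x ∈ X, (((NL E x) ∩ {a, b}).card + ((NL E x) ∩ (univ \ {a, b})).card) :=
          Finset.sum_le_sum (fun x hx => by
            have := hX1 x hx
            omega)
      _ = ∑ x ∈ X, (NL E x).card := by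
          refine Finset.sum_congr rfl (fun x hx => (hXsplit x hx).symm)
  have hPsum : 2 * P.card ≤ ∑ x ∈ P, (NL E x).card := by
    calc 2 * P.card = ∑ _x ∈ P, 2 := by rw [Finset.sum_const, smul_eq_mul, mul_comm]
      _ ≤ _ := Finset.sum_le_sum (fun x _ => hL2 x)
  have hcardP : P.card + (X.card + 1) = n := by
    rw [hP, card_sdiff_of_subset (subset_univ _), Finset.card_insert_of_notMem huX]
    have h1 := card_le_univ (insert u X)
    rw [Finset.card_insert_of_notMem huX] at h1
    simp only [card_univ, Fintype.card_fin] at h1 ⊢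
    omega
  have hEsum : E.card = ∑ x : Fin n, (NL E x).card := card_eq_sum_NL E
  by_cases hPc : 1 ≤ P.card
  · omega
  -- P empty case
  have hPc0 : P.card = 0 := by omega
  by_contra hbad
  push_neg at hbad
  -- every vertex except a,b has NR ⊆ X
  have hNRX : ∀ v : Fin n, v ≠ a → v ≠ b → NR E v ⊆ X := by
    intro v hva hvb x hx
    have hxu : x ≠ u := by
      intro h
      exact hmiss v hva hvb (h ▸ mem_NR.1 hx)
    have hxP : x ∉ P := by
      rw [hP] at *
      intro hmem
      rw [Finset.card_eq_zero] at hPc0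
      rw [hPc0] at hmem
      exact absurd hmem (Finset.notMem_empty x)
    rw [hP, mem_sdiff] at hxP
    push_neg at hxP
    rcases mem_insert.1 (hxP (mem_univ x)) with h | h
    · exact absurd h hxu
    · exact h
  -- degree of every v ∉ {a,b} is exactly 2
  have hNR2 : ∀ v ∈ univ \ ({a, b} : Finset (Fin n)), (NR E v).card = 2 := by
    have hsum2 : ∑ v ∈ univ \ {a, b}, ((NR E v) ∩ X).card ≤ 2 * (n - 2) := by
      have e1 : ∑ x ∈ X, (NL E x).card ≤ E.card - 2 := by omega
      have e2 : X.card + ∑ v ∈ univ \ {a, b}, ((NR E v) ∩ X).card ≤ E.card - 2 :=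
        le_trans hXsum e1
      omega
    intro v hv
    rw [mem_sdiff, mem_insert, mem_singleton] at hv
    push_neg at hv
    have hvin : v ∈ univ \ ({a, b} : Finset (Fin n)) := by
      rw [mem_sdiff, mem_insert, mem_singleton]
      exact ⟨mem_univ _, by push_neg; exact hv.2⟩
    have heqv : (NR E v) ∩ X = NR E v := Finset.inter_eq_left.2 (hNRX v hv.2.1 hv.2.2)
    have hsplitv : ∑ w ∈ (univ \ {a, b}) \ {v}, ((NR E w) ∩ X).card + ((NR E v) ∩ X).card
        = ∑ w ∈ univ \ {a, b}, ((NR E w) ∩ X).card := by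
      have := Finset.sum_sdiff (f := fun w => ((NR E w) ∩ X).card)
        (Finset.singleton_subset_iff.2 hvin)
      rwa [Finset.sum_singleton] at this
    have hrest : 2 * ((univ \ ({a, b} : Finset (Fin n))).card - 1)
        ≤ ∑ w ∈ (univ \ {a, b}) \ {v}, ((NR E w) ∩ X).card := by
      have hcc : ((univ \ ({a, b} : Finset (Fin n))) \ {v}).card
          = (univ \ ({a, b} : Finset (Fin n))).card - 1 := by
        rw [card_sdiff_of_subset (Finset.singleton_subset_iff.2 hvin)]
        simp
      calc 2 * ((univ \ ({a, b} : Finset (Fin n))).card - 1)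
          = ∑ _w ∈ (univ \ {a, b}) \ {v}, 2 := by
            rw [Finset.sum_const, smul_eq_mul, mul_comm, hcc]
        _ ≤ _ := Finset.sum_le_sum (fun w hw => by
            rw [mem_sdiff, mem_sdiff, mem_insert, mem_singleton] at hw
            push_neg at hw
            exact hcovX w hw.1.2.1 hw.1.2.2)
    have hdeg : 2 ≤ (NR E v).card := hR2 v
    rw [heqv] at hsplitv
    omega
  -- Ta / Tb structure
  have hside : ∀ v : Fin n, v ≠ a → v ≠ b → NR E v ⊆ NR E a ∨ NR E v ⊆ NR E b := by
    intro v hva hvb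
    have h2 : (NR E v).card = 2 := hNR2 v (by
      rw [mem_sdiff, mem_insert, mem_singleton]; push_neg
      exact ⟨mem_univ _, hva, hvb⟩)
    rcases hcov v hva hvb with h | h
    · left
      have heq : (NR E v) ∩ (NR E a) = NR E v :=
        Finset.eq_of_subset_of_card_le inter_subset_left (by omega)
      rw [← heq]; exact inter_subset_right
    · right
      have heq : (NR E v) ∩ (NR E b) = NR E v :=
        Finset.eq_of_subset_of_card_le inter_subset_left (by omega)
      rw [← heq]; exact inter_subset_right
  have hdisj : ∀ v : Fin n, v ≠ a → v ≠ b → ¬(NR E v ⊆ NR E a ∧ NR E v ⊆ NR E b) := by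
    intro v hva hvb ⟨h1, h2⟩
    have : NR E v ⊆ {u} := by
      rw [← hz]; exact Finset.subset_inter h1 h2
    have hcc := card_le_card this
    have := hR2 v
    simp at hcc
    omega
  set Ta : Finset (Fin n) := (univ \ {a, b}).filter (fun v => NR E v ⊆ NR E a) with hTa
  set Tb : Finset (Fin n) := (univ \ {a, b}).filter (fun v => NR E v ⊆ NR E b) with hTb
  have hNLA : ∀ x ∈ NR E a \ {u}, NL E x ⊆ insert a Ta := by
    intro x hx w hw
    rw [mem_sdiff, mem_singleton] at hx
    by_cases hwa : w = a
    · rw [hwa]; exact mem_insert_self _ _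
    by_cases hwb : w = b
    · exfalso
      have : x ∈ NR E a ∩ NR E b := mem_inter.2 ⟨hx.1, by
        rw [mem_NR, ← hwb]; exact mem_NL.1 hw⟩
      rw [hz, mem_singleton] at this
      exact hx.2 this
    rcases hside w hwa hwb with h | h
    · refine mem_insert_of_mem ?_
      rw [hTa, mem_filter, mem_sdiff, mem_insert, mem_singleton]
      push_neg
      exact ⟨⟨mem_univ _, hwa, hwb⟩, h⟩
    · exfalso
      have : x ∈ NR E b := h (by rw [mem_NR]; exact mem_NL.1 hw)
      have : x ∈ NR E a ∩ NR E b := mem_inter.2 ⟨hx.1, this⟩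
      rw [hz, mem_singleton] at this
      exact hx.2 this
  have hNLB : ∀ x ∈ NR E b \ {u}, NL E x ⊆ insert b Tb := by
    intro x hx w hw
    rw [mem_sdiff, mem_singleton] at hx
    by_cases hwb : w = b
    · rw [hwb]; exact mem_insert_self _ _
    by_cases hwa : w = a
    · exfalso
      have : x ∈ NR E a ∩ NR E b := mem_inter.2 ⟨by
        rw [mem_NR, ← hwa]; exact mem_NL.1 hw, hx.1⟩
      rw [hz, mem_singleton] at this
      exact hx.2 this
    rcases hside w hwa hwb with h | h
    · exfalso
      have h1 : x ∈ NR E a := h (by rw [mem_NR]; exact mem_NL.1 hw)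
      have : x ∈ NR E a ∩ NR E b := mem_inter.2 ⟨h1, hx.1⟩
      rw [hz, mem_singleton] at this
      exact hx.2 this
    · refine mem_insert_of_mem ?_
      rw [hTb, mem_filter, mem_sdiff, mem_insert, mem_singleton]
      push_neg
      exact ⟨⟨mem_univ _, hwa, hwb⟩, h⟩
  -- pick x ∈ NR a \ {u}, y ∈ NR b \ {u}
  obtain ⟨x0, hx0, hx0u⟩ := exists_ne_of_two_le (hR2 a) u
  obtain ⟨y0, hy0, hy0u⟩ := exists_ne_of_two_le (hR2 b) u
  have hx0' : x0 ∈ NR E a \ {u} := by rw [mem_sdiff, mem_singleton]; exact ⟨hx0, hx0u⟩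
  have hy0' : y0 ∈ NR E b \ {u} := by rw [mem_sdiff, mem_singleton]; exact ⟨hy0, hy0u⟩
  -- y0 has a neighbor in Tb
  obtain ⟨vb, hvb, hvbb⟩ := exists_ne_of_two_le (hL2 y0) b
  have hvbTb : vb ∈ Tb := by
    have := hNLB y0 hy0' hvb
    rcases mem_insert.1 this with h | h
    · exact absurd h hvbb
    · exact h
  have hvbprop : NR E vb ⊆ NR E b ∧ vb ≠ a ∧ vb ≠ b := by
    rw [hTb, mem_filter, mem_sdiff, mem_insert, mem_singleton] at hvbTb
    push_neg at hvbTb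
    exact ⟨hvbTb.2, hvbTb.1.2⟩
  -- (x0, vb) is a missing edge
  have hmiss2 : (x0, vb) ∉ E := by
    intro h
    have : x0 ∈ NR E vb := mem_NR.2 h
    have : x0 ∈ NR E a ∩ NR E b := mem_inter.2 ⟨hx0, hvbprop.1 this⟩
    rw [hz, mem_singleton] at this
    exact hx0u this
  -- saturation fails
  rcases hchar x0 vb hmiss2 with ⟨u', hneu, hEu, hcd⟩ | ⟨v', hnev, hEv, hcd⟩
  · -- u' ∈ NR vb ⊆ NR b, u' ≠ u
    have hu'b : u' ∈ NR E b := hvbprop.1 (mem_NR.2 hEu)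
    have hu'u : u' ≠ u := by
      intro h
      subst h
      have : vb ∈ NL E u' := mem_NL.2 hEu
      rw [hab] at this
      rcases mem_insert.1 this with h' | h'
      · exact hvbprop.2.1 h'
      · exact hvbprop.2.2 (mem_singleton.1 h')
    have hu'in : u' ∈ NR E b \ {u} := by rw [mem_sdiff, mem_singleton]; exact ⟨hu'b, hu'u⟩
    have hempty : NL E x0 ∩ NL E u' = ∅ := by
      rw [Finset.eq_empty_iff_forall_notMem]
      intro w hw
      rw [mem_inter] at hw
      have hw1 := hNLA x0 hx0' hw.1
      have hw2 := hNLB u' hu'in hw.2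
      rcases mem_insert.1 hw1 with h1 | h1
      · rcases mem_insert.1 hw2 with h2 | h2
        · exact hne (h1.symm.trans h2)
        · rw [hTb, mem_filter, mem_sdiff, mem_insert, mem_singleton] at h2
          push_neg at h2
          exact h2.1.2.1 h1
      · rcases mem_insert.1 hw2 with h2 | h2
        · rw [hTa, mem_filter, mem_sdiff, mem_insert, mem_singleton] at h1
          push_neg at h1
          exact h1.1.2.2 h2
        · rw [hTa, mem_filter, mem_sdiff, mem_insert, mem_singleton] at h1
          rw [hTb, mem_filter, mem_sdiff, mem_insert, mem_singleton] at h2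
          push_neg at h1 h2
          exact hdisj w h1.1.2.1 h1.1.2.2 ⟨h1.2, h2.2⟩
    rw [hempty] at hcd
    simp at hcd
  · -- v' ∈ NL x0 ⊆ insert a Ta
    have hv'in := hNLA x0 hx0' (mem_NL.2 hEv)
    have hsubB : NR E vb ∩ NR E v' ⊆ {u} := by
      intro w hw
      rw [mem_inter] at hw
      have hwb : w ∈ NR E b := hvbprop.1 hw.1
      have hwa : w ∈ NR E a := by
        rcases mem_insert.1 hv'in with h | h
        · exact h ▸ hw.2
        · rw [hTa, mem_filter] at h
          exact h.2 hw.2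
      rw [← hz, mem_inter]
      exact ⟨hwa, hwb⟩
    have hule : (NR E vb ∩ NR E v').card ≤ 1 := by
      have := card_le_card hsubB
      simpa using this
    omega
end K23
-- L4' master light
namespace K23
variable {n : ℕ}

lemma master_light {E : Finset (Fin n × Fin n)} (hchar : SatChar E)
    (hL2 : ∀ x, 2 ≤ (NL E x).card)
    (u a b z : Fin n) (hne : a ≠ b) (hab : NL E u = {a, b})
    (habz : NR E a ∩ NR E b = {u, z}) (huz : u ≠ z) :
    3 * n ≤ E.card + (NL E z).card := by
  classical
  have hua : u ∈ NR E a := by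
    have : u ∈ NR E a ∩ NR E b := by rw [habz]; exact mem_insert_self _ _
    exact (mem_inter.1 this).1
  have hub : u ∈ NR E b := by
    have : u ∈ NR E a ∩ NR E b := by rw [habz]; exact mem_insert_self _ _
    exact (mem_inter.1 this).2
  have hza : z ∈ NR E a := by
    have : z ∈ NR E a ∩ NR E b := by
      rw [habz]; exact mem_insert_of_mem (mem_singleton_self _)
    exact (mem_inter.1 this).1
  have hzb : z ∈ NR E b := by
    have : z ∈ NR E a ∩ NR E b := by
      rw [habz]; exact mem_insert_of_mem (mem_singleton_self _)
    exact (mem_inter.1 this).2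
  set X : Finset (Fin n) := (NR E a ∪ NR E b) \ {u, z} with hX
  set T : Finset (Fin n) :=
    (univ \ {a, b}).filter (fun v => 2 ≤ ((NR E v) ∩ insert z X).card) with hT
  set S : Finset (Fin n) :=
    (univ \ {a, b}).filter (fun v => ¬ 2 ≤ ((NR E v) ∩ insert z X).card) with hS
  have hmiss : ∀ v : Fin n, v ≠ a → v ≠ b → (u, v) ∉ E := by
    intro v hva hvb h
    have : v ∈ NL E u := mem_NL.2 h
    rw [hab] at this
    rcases mem_insert.1 this with h' | h'
    · exact hva h'
    · exact hvb (mem_singleton.1 h')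
  -- every S vertex is adjacent to z
  have hSz : ∀ v ∈ S, z ∈ NR E v := by
    intro v hv
    rw [hS, mem_filter, mem_sdiff, mem_insert, mem_singleton] at hv
    push_neg at hv
    obtain ⟨⟨_, hva, hvb⟩, hnot⟩ := hv
    rcases hchar u v (hmiss v hva hvb) with ⟨u', hneu, hEu, hcd⟩ | ⟨v', hnev, hEv, hcd⟩
    · have hsub : NL E u ∩ NL E u' ⊆ {a, b} := by rw [hab]; exact inter_subset_left
      have heq : NL E u ∩ NL E u' = {a, b} :=
        Finset.eq_of_subset_of_card_le hsub (by rw [card_pair hne]; exact hcd)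
      have hu'ab : u' ∈ NR E a ∩ NR E b := by
        rw [mem_inter, mem_NR, mem_NR]
        constructor
        · have : a ∈ NL E u ∩ NL E u' := by rw [heq]; exact mem_insert_self _ _
          exact mem_NL.1 (mem_inter.1 this).2
        · have : b ∈ NL E u ∩ NL E u' := by
            rw [heq]; exact mem_insert_of_mem (mem_singleton_self _)
          exact mem_NL.1 (mem_inter.1 this).2
      rw [habz] at hu'ab
      rcases mem_insert.1 hu'ab with h' | h'
      · exact absurd h' hneu
      · rw [mem_singleton.1 h'] at hEu
        exact mem_NR.2 hEu
    · exfalso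
      have hv' : v' ∈ NL E u := mem_NL.2 hEv
      rw [hab] at hv'
      have hsub : NR E v ∩ NR E v' ⊆ NR E v ∩ insert z X := by
        intro x hx
        rw [mem_inter] at hx ⊢
        refine ⟨hx.1, ?_⟩
        have hxu : x ≠ u := by
          intro h
          exact hmiss v hva hvb (h ▸ mem_NR.1 hx.1)
        by_cases hxz : x = z
        · rw [hxz]; exact mem_insert_self _ _
        refine mem_insert_of_mem ?_
        rw [hX, mem_sdiff, mem_insert, mem_singleton]
        refine ⟨?_, by push_neg; exact ⟨hxu, hxz⟩⟩
        rcases mem_insert.1 hv' with h' | h'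
        · exact mem_union_left _ (h' ▸ hx.2)
        · exact mem_union_right _ ((mem_singleton.1 h') ▸ hx.2)
      exact absurd (le_trans hcd (card_le_card hsub)) (by omega)
  -- partition of left side
  have huX : u ∉ X := by simp [hX]
  have hzX : z ∉ X := by simp [hX]
  have huzX : u ∉ insert z X := by
    rw [mem_insert]; push_neg; exact ⟨huz, huX⟩
  set P : Finset (Fin n) := univ \ insert u (insert z X) with hP
  have hsplit : ∑ x ∈ P, (NL E x).card + ∑ x ∈ insert u (insert z X), (NL E x).card
      = ∑ x : Fin n, (NL E x).card := Finset.sum_sdiff (subset_univ _)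
  have hAsum : ∑ x ∈ insert u (insert z X), (NL E x).card
      = 2 + ((NL E z).card + ∑ x ∈ X, (NL E x).card) := by
    rw [Finset.sum_insert huzX, Finset.sum_insert hzX, hab, card_pair hne]
  -- z's degree
  have hdz : 2 + ((NL E z ∩ T).card + S.card) ≤ (NL E z).card := by
    have hsub : ({a, b} : Finset (Fin n)) ∪ ((NL E z ∩ T) ∪ S) ⊆ NL E z := by
      intro w hw
      rcases mem_union.1 hw with h | h
      · rcases mem_insert.1 h with h' | h'
        · rw [h', mem_NL]; exact mem_NR.1 hza
        · rw [mem_singleton.1 h', mem_NL]; exact mem_NR.1 hzb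
      · rcases mem_union.1 h with h' | h'
        · exact (mem_inter.1 h').1
        · rw [mem_NL]
          exact mem_NR.1 (hSz w h')
    have hd1 : Disjoint (NL E z ∩ T) S := by
      rw [Finset.disjoint_left]
      intro w hw hw'
      have h2 := (mem_inter.1 hw).2
      rw [hT, mem_filter] at h2
      rw [hS, mem_filter] at hw'
      exact hw'.2 h2.2
    have hd2 : Disjoint ({a, b} : Finset (Fin n)) ((NL E z ∩ T) ∪ S) := by
      rw [Finset.disjoint_left]
      intro w hw hw'
      have hwab : w ∈ univ \ ({a, b} : Finset (Fin n)) := by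
        rcases mem_union.1 hw' with h | h
        · have := (mem_inter.1 h).2
          rw [hT, mem_filter] at this
          exact this.1
        · rw [hS, mem_filter] at h
          exact h.1
      rw [mem_sdiff] at hwab
      exact hwab.2 hw
    calc 2 + ((NL E z ∩ T).card + S.card)
        = ({a, b} : Finset (Fin n)).card + ((NL E z ∩ T) ∪ S).card := by
          rw [card_pair hne, Finset.card_union_of_disjoint hd1]
      _ = (({a, b} : Finset (Fin n)) ∪ ((NL E z ∩ T) ∪ S)).card :=
          (Finset.card_union_of_disjoint hd2).symm
      _ ≤ (NL E z).card := card_le_card hsub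
  -- X degrees
  have hXdeg : ∀ x ∈ X, 1 + ((NL E x) ∩ T).card ≤ (NL E x).card := by
    intro x hx
    have hone : 1 ≤ ((NL E x) ∩ {a, b}).card := by
      rw [hX, mem_sdiff] at hx
      rcases mem_union.1 hx.1 with h | h
      · exact card_pos.2 ⟨a, mem_inter.2 ⟨mem_NL.2 (mem_NR.1 h), mem_insert_self _ _⟩⟩
      · exact card_pos.2 ⟨b, mem_inter.2 ⟨mem_NL.2 (mem_NR.1 h),
          mem_insert_of_mem (mem_singleton_self _)⟩⟩
    have hd : Disjoint ((NL E x) ∩ {a, b}) ((NL E x) ∩ T) := by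
      rw [Finset.disjoint_left]
      intro w hw hw'
      have h1 := (mem_inter.1 hw).2
      have h2 := (mem_inter.1 hw').2
      rw [hT, mem_filter, mem_sdiff] at h2
      exact h2.1.2 h1
    calc 1 + ((NL E x) ∩ T).card ≤ ((NL E x) ∩ {a, b}).card + ((NL E x) ∩ T).card := by
          omega
      _ = (((NL E x) ∩ {a, b}) ∪ ((NL E x) ∩ T)).card :=
          (Finset.card_union_of_disjoint hd).symm
      _ ≤ (NL E x).card := card_le_card (by
          intro w hw
          rcases mem_union.1 hw with h | h
          · exact (mem_inter.1 h).1
          · exact (mem_inter.1 h).1)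
  have hXsum : X.card + ∑ x ∈ X, ((NL E x) ∩ T).card ≤ ∑ x ∈ X, (NL E x).card := by
    calc X.card + ∑ x ∈ X, ((NL E x) ∩ T).card
        = ∑ x ∈ X, (1 + ((NL E x) ∩ T).card) := by
          rw [Finset.sum_add_distrib, Finset.sum_const, smul_eq_mul, mul_one]
      _ ≤ _ := Finset.sum_le_sum hXdeg
  -- T coverage
  have hTcov : 2 * T.card ≤ ∑ x ∈ X, ((NL E x) ∩ T).card + (NL E z ∩ T).card := by
    have he1 : ∑ x ∈ X, ((NL E x) ∩ T).card = ∑ v ∈ T, ((NR E v) ∩ X).card :=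
      sum_NL_inter E X T
    have he2 : (NL E z ∩ T).card = ∑ v ∈ T, ((NR E v) ∩ {z}).card := by
      have := sum_NL_inter E {z} T
      rw [Finset.sum_singleton] at this
      exact this
    rw [he1, he2, ← Finset.sum_add_distrib]
    calc 2 * T.card = ∑ _v ∈ T, 2 := by rw [Finset.sum_const, smul_eq_mul, mul_comm]
      _ ≤ _ := Finset.sum_le_sum (fun v hv => by
          rw [hT, mem_filter] at hv
          refine le_trans hv.2 ?_
          have : (NR E v) ∩ insert z X ⊆ ((NR E v) ∩ X) ∪ ((NR E v) ∩ {z}) := by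
            intro w hw
            rw [mem_inter] at hw
            rcases mem_insert.1 hw.2 with h | h
            · exact mem_union_right _ (mem_inter.2 ⟨hw.1, by rw [h]; exact mem_singleton_self _⟩)
            · exact mem_union_left _ (mem_inter.2 ⟨hw.1, h⟩)
          exact le_trans (card_le_card this) (card_union_le _ _))
  -- P sum
  have hPsum : 2 * P.card ≤ ∑ x ∈ P, (NL E x).card := by
    calc 2 * P.card = ∑ _x ∈ P, 2 := by rw [Finset.sum_const, smul_eq_mul, mul_comm]
      _ ≤ _ := Finset.sum_le_sum (fun x _ => hL2 x)
  -- cardinalities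
  have hcardP : P.card + (X.card + 2) = n := by
    rw [hP, card_sdiff_of_subset (subset_univ _), Finset.card_insert_of_notMem huzX,
      Finset.card_insert_of_notMem hzX]
    have h1 := card_le_univ (insert u (insert z X))
    rw [Finset.card_insert_of_notMem huzX, Finset.card_insert_of_notMem hzX] at h1
    simp only [card_univ, Fintype.card_fin] at h1 ⊢
    omega
  have hcard_ab : (univ \ ({a, b} : Finset (Fin n))).card + 2 = n := by
    rw [card_sdiff_of_subset (subset_univ _), card_pair hne]
    have h1 := card_le_univ ({a, b} : Finset (Fin n))
    rw [card_pair hne] at h1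
    simp only [card_univ, Fintype.card_fin] at h1 ⊢
    omega
  have hcardTS : T.card + S.card + 2 = n := by
    have h0 := Finset.card_filter_add_card_filter_not
      (s := univ \ ({a, b} : Finset (Fin n)))
      (p := fun v => 2 ≤ ((NR E v) ∩ insert z X).card)
    rw [← hT, ← hS] at h0
    omega
  have hEsum : E.card = ∑ x : Fin n, (NL E x).card := card_eq_sum_NL E
  omega

end K23
-- main case with minimality
namespace K23
variable {n : ℕ}

lemma main_case {E : Finset (Fin n × Fin n)} (hchar : SatChar E) (hcodL : CodegL E)
    (hchar' : SatChar (sw E))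
    (hL2 : ∀ x, 2 ≤ (NL E x).card) (hR2 : ∀ v, 2 ≤ (NR E v).card)
    (u a b z : Fin n) (hne : a ≠ b) (hab : NL E u = {a, b})
    (habz : NR E a ∩ NR E b = {u, z}) (huz : u ≠ z)
    (hmin : ∀ v x y w : Fin n, NR E v = {x, y} → x ≠ y →
      NL E x ∩ NL E y = {v, w} → v ≠ w → (NL E z).card ≤ (NR E w).card) :
    3 * n ≤ E.card + 2 := by
  classical
  by_contra hbad
  push_neg at hbad
  have hL2' : ∀ x, 2 ≤ (NL (sw E) x).card := by
    intro x; rw [NL_sw]; exact hR2 x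
  have hua : u ∈ NR E a := by
    have : u ∈ NR E a ∩ NR E b := by rw [habz]; exact mem_insert_self _ _
    exact (mem_inter.1 this).1
  have hub : u ∈ NR E b := by
    have : u ∈ NR E a ∩ NR E b := by rw [habz]; exact mem_insert_self _ _
    exact (mem_inter.1 this).2
  have hza : z ∈ NR E a := by
    have : z ∈ NR E a ∩ NR E b := by
      rw [habz]; exact mem_insert_of_mem (mem_singleton_self _)
    exact (mem_inter.1 this).1
  have hzb : z ∈ NR E b := by
    have : z ∈ NR E a ∩ NR E b := by
      rw [habz]; exact mem_insert_of_mem (mem_singleton_self _)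
    exact (mem_inter.1 this).2
  set X : Finset (Fin n) := (NR E a ∪ NR E b) \ {u, z} with hX
  set T : Finset (Fin n) :=
    (univ \ {a, b}).filter (fun v => 2 ≤ ((NR E v) ∩ insert z X).card) with hT
  set S : Finset (Fin n) :=
    (univ \ {a, b}).filter (fun v => ¬ 2 ≤ ((NR E v) ∩ insert z X).card) with hS
  have hmiss : ∀ v : Fin n, v ≠ a → v ≠ b → (u, v) ∉ E := by
    intro v hva hvb h
    have : v ∈ NL E u := mem_NL.2 h
    rw [hab] at this
    rcases mem_insert.1 this with h' | h'
    · exact hva h'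
    · exact hvb (mem_singleton.1 h')
  have hSab : ∀ v ∈ S, v ≠ a ∧ v ≠ b := by
    intro v hv
    rw [hS, mem_filter, mem_sdiff, mem_insert, mem_singleton] at hv
    push_neg at hv
    exact hv.1.2
  have hTab : ∀ v ∈ T, v ≠ a ∧ v ≠ b := by
    intro v hv
    rw [hT, mem_filter, mem_sdiff, mem_insert, mem_singleton] at hv
    push_neg at hv
    exact hv.1.2
  have hSlow : ∀ v ∈ S, ((NR E v) ∩ insert z X).card ≤ 1 := by
    intro v hv
    rw [hS, mem_filter] at hv
    omega
  -- every S vertex is adjacent to z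
  have hSz : ∀ v ∈ S, z ∈ NR E v := by
    intro v hv
    obtain ⟨hva, hvb⟩ := hSab v hv
    have hnot := hSlow v hv
    rcases hchar u v (hmiss v hva hvb) with ⟨u', hneu, hEu, hcd⟩ | ⟨v', hnev, hEv, hcd⟩
    · have hsub : NL E u ∩ NL E u' ⊆ {a, b} := by rw [hab]; exact inter_subset_left
      have heq : NL E u ∩ NL E u' = {a, b} :=
        Finset.eq_of_subset_of_card_le hsub (by rw [card_pair hne]; exact hcd)
      have hu'ab : u' ∈ NR E a ∩ NR E b := by
        rw [mem_inter, mem_NR, mem_NR]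
        constructor
        · have : a ∈ NL E u ∩ NL E u' := by rw [heq]; exact mem_insert_self _ _
          exact mem_NL.1 (mem_inter.1 this).2
        · have : b ∈ NL E u ∩ NL E u' := by
            rw [heq]; exact mem_insert_of_mem (mem_singleton_self _)
          exact mem_NL.1 (mem_inter.1 this).2
      rw [habz] at hu'ab
      rcases mem_insert.1 hu'ab with h' | h'
      · exact absurd h' hneu
      · rw [mem_singleton.1 h'] at hEu
        exact mem_NR.2 hEu
    · exfalso
      have hv' : v' ∈ NL E u := mem_NL.2 hEv
      rw [hab] at hv'
      have hsub : NR E v ∩ NR E v' ⊆ NR E v ∩ insert z X := by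
        intro x hx
        rw [mem_inter] at hx ⊢
        refine ⟨hx.1, ?_⟩
        have hxu : x ≠ u := by
          intro h
          exact hmiss v hva hvb (h ▸ mem_NR.1 hx.1)
        by_cases hxz : x = z
        · rw [hxz]; exact mem_insert_self _ _
        refine mem_insert_of_mem ?_
        rw [hX, mem_sdiff, mem_insert, mem_singleton]
        refine ⟨?_, by push_neg; exact ⟨hxu, hxz⟩⟩
        rcases mem_insert.1 hv' with h' | h'
        · exact mem_union_left _ (h' ▸ hx.2)
        · exact mem_union_right _ ((mem_singleton.1 h') ▸ hx.2)
      exact absurd (le_trans hcd (card_le_card hsub)) (by omega)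
  -- partition of left side
  have huX : u ∉ X := by simp [hX]
  have hzX : z ∉ X := by simp [hX]
  have huzX : u ∉ insert z X := by
    rw [mem_insert]; push_neg; exact ⟨huz, huX⟩
  set P : Finset (Fin n) := univ \ insert u (insert z X) with hP
  have hzP : z ∉ P := by
    rw [hP, mem_sdiff]
    push_neg
    intro _
    exact mem_insert_of_mem (mem_insert_self _ _)
  have huP : u ∉ P := by
    rw [hP, mem_sdiff]
    push_neg
    intro _
    exact mem_insert_self _ _
  have hsplit : ∑ x ∈ P, (NL E x).card + ∑ x ∈ insert u (insert z X), (NL E x).card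
      = ∑ x : Fin n, (NL E x).card := Finset.sum_sdiff (subset_univ _)
  have hAsum : ∑ x ∈ insert u (insert z X), (NL E x).card
      = 2 + ((NL E z).card + ∑ x ∈ X, (NL E x).card) := by
    rw [Finset.sum_insert huzX, Finset.sum_insert hzX, hab, card_pair hne]
  -- S vertices: not adjacent to X ∪ {u}
  have hSnoX : ∀ v ∈ S, ∀ x ∈ X, x ∉ NR E v := by
    intro v hv x hx hmem
    have : ({x, z} : Finset (Fin n)) ⊆ (NR E v) ∩ insert z X := by
      intro w hw
      rcases mem_insert.1 hw with h | h
      · subst h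
        exact mem_inter.2 ⟨hmem, mem_insert_of_mem hx⟩
      · rw [mem_singleton.1 h]
        exact mem_inter.2 ⟨hSz v hv, mem_insert_self _ _⟩
    have hxz : x ≠ z := fun h => hzX (h ▸ hx)
    have := card_le_card this
    rw [card_pair hxz] at this
    exact absurd (le_trans this (le_refl _)) (by have := hSlow v hv; omega)
  have hSP : ∀ v ∈ S, NR E v ⊆ insert z P := by
    intro v hv x hx
    obtain ⟨hva, hvb⟩ := hSab v hv
    by_cases hxz : x = z
    · rw [hxz]; exact mem_insert_self _ _
    refine mem_insert_of_mem ?_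
    rw [hP, mem_sdiff]
    refine ⟨mem_univ _, ?_⟩
    intro hmem
    rcases mem_insert.1 hmem with h | h
    · exact hmiss v hva hvb (h ▸ mem_NR.1 hx)
    · rcases mem_insert.1 h with h' | h'
      · exact hxz h'
      · exact hSnoX v hv x h' hx
  have hSdeg : ∀ v ∈ S, (NR E v).card = 1 + ((NR E v) ∩ P).card := by
    intro v hv
    have heq : NR E v = insert z ((NR E v) ∩ P) := by
      apply Finset.Subset.antisymm
      · intro x hx
        by_cases hxz : x = z
        · rw [hxz]; exact mem_insert_self _ _
        · refine mem_insert_of_mem (mem_inter.2 ⟨hx, ?_⟩)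
          rcases mem_insert.1 (hSP v hv hx) with h | h
          · exact absurd h hxz
          · exact h
      · intro x hx
        rcases mem_insert.1 hx with h | h
        · rw [h]; exact hSz v hv
        · exact (mem_inter.1 h).1
    have hnot : z ∉ (NR E v) ∩ P := fun h => hzP (mem_inter.1 h).2
    conv_lhs => rw [heq]
    rw [Finset.card_insert_of_notMem hnot]
    omega
  -- X structure
  have hXone : ∀ x ∈ X, ((NL E x) ∩ {a, b}).card = 1 := by
    intro x hx
    rw [hX, mem_sdiff, mem_insert, mem_singleton] at hx
    push_neg at hx
    have hge : 1 ≤ ((NL E x) ∩ {a, b}).card := by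
      rcases mem_union.1 hx.1 with h | h
      · exact card_pos.2 ⟨a, mem_inter.2 ⟨mem_NL.2 (mem_NR.1 h), mem_insert_self _ _⟩⟩
      · exact card_pos.2 ⟨b, mem_inter.2 ⟨mem_NL.2 (mem_NR.1 h),
          mem_insert_of_mem (mem_singleton_self _)⟩⟩
    have hle : ((NL E x) ∩ {a, b}).card ≤ 1 := by
      by_contra hc
      push_neg at hc
      have heq : (NL E x) ∩ {a, b} = {a, b} :=
        Finset.eq_of_subset_of_card_le inter_subset_right (by rw [card_pair hne]; omega)
      have hax : a ∈ NL E x := by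
        have : a ∈ (NL E x) ∩ {a, b} := by rw [heq]; exact mem_insert_self _ _
        exact (mem_inter.1 this).1
      have hbx : b ∈ NL E x := by
        have : b ∈ (NL E x) ∩ {a, b} := by
          rw [heq]; exact mem_insert_of_mem (mem_singleton_self _)
        exact (mem_inter.1 this).1
      have : x ∈ NR E a ∩ NR E b := by
        rw [mem_inter, mem_NR, mem_NR]
        exact ⟨mem_NL.1 hax, mem_NL.1 hbx⟩
      rw [habz] at this
      rcases mem_insert.1 this with h | h
      · exact hx.2.1 h
      · exact hx.2.2 (mem_singleton.1 h)
    omega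
  have hXS : ∀ x ∈ X, (NL E x) ∩ S = ∅ := by
    intro x hx
    rw [Finset.eq_empty_iff_forall_notMem]
    intro w hw
    rw [mem_inter] at hw
    exact hSnoX w hw.2 x hx (mem_NR.2 (mem_NL.1 hw.1))
  have hTSunion : T ∪ S = univ \ ({a, b} : Finset (Fin n)) := by
    rw [hT, hS]
    exact Finset.filter_union_filter_not_eq _ _
  have hTSdisjoint : Disjoint T S := by
    rw [Finset.disjoint_left]
    intro w hw hw'
    rw [hT, mem_filter] at hw
    rw [hS, mem_filter] at hw'
    exact hw'.2 hw.2
  have hXdegsplit : ∀ x ∈ X,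
      (NL E x).card = 1 + ((NL E x) ∩ T).card := by
    intro x hx
    have h1 : (NL E x).card
        = ((NL E x) ∩ {a, b}).card + ((NL E x) ∩ (univ \ {a, b})).card := by
      have hsd : NL E x \ ({a, b} : Finset (Fin n)) = NL E x ∩ (univ \ {a, b}) := by
        ext w
        simp only [mem_sdiff, mem_inter, mem_univ, true_and]
      rw [← Finset.card_inter_add_card_sdiff (NL E x) ({a, b} : Finset (Fin n)), hsd]
    have h2 : (NL E x) ∩ (univ \ {a, b}) = ((NL E x) ∩ T) ∪ ((NL E x) ∩ S) := by
      rw [← hTSunion, Finset.inter_union_distrib_left]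
    have h3 : ((NL E x) ∩ (univ \ {a, b})).card = ((NL E x) ∩ T).card := by
      rw [h2, hXS x hx, Finset.union_empty]
    rw [h1, h3, hXone x hx]
  have hXsum : ∑ x ∈ X, (NL E x).card = X.card + ∑ x ∈ X, ((NL E x) ∩ T).card := by
    rw [Finset.sum_congr rfl hXdegsplit, Finset.sum_add_distrib, Finset.sum_const,
      smul_eq_mul, mul_one]
  have hXTge : X.card ≤ ∑ x ∈ X, ((NL E x) ∩ T).card := by
    have : ∀ x ∈ X, 1 ≤ ((NL E x) ∩ T).card := by
      intro x hx
      have := hXdegsplit x hx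
      have h2 := hL2 x
      omega
    calc X.card = ∑ _x ∈ X, 1 := by simp
      _ ≤ _ := Finset.sum_le_sum this
  -- T coverage
  have hTcov : 2 * T.card ≤ ∑ x ∈ X, ((NL E x) ∩ T).card + (NL E z ∩ T).card := by
    have he1 : ∑ x ∈ X, ((NL E x) ∩ T).card = ∑ v ∈ T, ((NR E v) ∩ X).card :=
      sum_NL_inter E X T
    have he2 : (NL E z ∩ T).card = ∑ v ∈ T, ((NR E v) ∩ {z}).card := by
      have := sum_NL_inter E {z} T
      rw [Finset.sum_singleton] at this
      exact this
    rw [he1, he2, ← Finset.sum_add_distrib]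
    calc 2 * T.card = ∑ _v ∈ T, 2 := by rw [Finset.sum_const, smul_eq_mul, mul_comm]
      _ ≤ _ := Finset.sum_le_sum (fun v hv => by
          rw [hT, mem_filter] at hv
          refine le_trans hv.2 ?_
          have hsub : (NR E v) ∩ insert z X ⊆ ((NR E v) ∩ X) ∪ ((NR E v) ∩ {z}) := by
            intro w hw
            rw [mem_inter] at hw
            rcases mem_insert.1 hw.2 with h | h
            · exact mem_union_right _ (mem_inter.2 ⟨hw.1, by rw [h]; exact mem_singleton_self _⟩)
            · exact mem_union_left _ (mem_inter.2 ⟨hw.1, h⟩)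
          exact le_trans (card_le_card hsub) (card_union_le _ _))
  -- z degree lower bound
  have hdz : 2 + ((NL E z ∩ T).card + S.card) ≤ (NL E z).card := by
    have hsub : ({a, b} : Finset (Fin n)) ∪ ((NL E z ∩ T) ∪ S) ⊆ NL E z := by
      intro w hw
      rcases mem_union.1 hw with h | h
      · rcases mem_insert.1 h with h' | h'
        · rw [h', mem_NL]; exact mem_NR.1 hza
        · rw [mem_singleton.1 h', mem_NL]; exact mem_NR.1 hzb
      · rcases mem_union.1 h with h' | h'
        · exact (mem_inter.1 h').1
        · rw [mem_NL]
          exact mem_NR.1 (hSz w h')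
    have hd1 : Disjoint (NL E z ∩ T) S :=
      Finset.disjoint_of_subset_left inter_subset_right hTSdisjoint
    have hd2 : Disjoint ({a, b} : Finset (Fin n)) ((NL E z ∩ T) ∪ S) := by
      rw [Finset.disjoint_left]
      intro w hw hw'
      have hwab : w ∈ univ \ ({a, b} : Finset (Fin n)) := by
        rcases mem_union.1 hw' with h | h
        · rw [← hTSunion]
          exact mem_union_left _ (mem_inter.1 h).2
        · rw [← hTSunion]
          exact mem_union_right _ h
      rw [mem_sdiff] at hwab
      exact hwab.2 hw
    calc 2 + ((NL E z ∩ T).card + S.card)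
        = ({a, b} : Finset (Fin n)).card + ((NL E z ∩ T) ∪ S).card := by
          rw [card_pair hne, Finset.card_union_of_disjoint hd1]
      _ = (({a, b} : Finset (Fin n)) ∪ ((NL E z ∩ T) ∪ S)).card :=
          (Finset.card_union_of_disjoint hd2).symm
      _ ≤ (NL E z).card := card_le_card hsub
  -- P structure
  have hPTS : ∀ ρ ∈ P, NL E ρ ⊆ T ∪ S := by
    intro ρ hρ w hw
    have hρin : ρ ∉ insert u (insert z X) := by
      rw [hP, mem_sdiff] at hρ
      exact hρ.2
    rw [hTSunion, mem_sdiff]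
    refine ⟨mem_univ _, ?_⟩
    intro hwab
    apply hρin
    have hρa : ρ ∈ NR E a ∪ NR E b := by
      rcases mem_insert.1 hwab with h | h
      · exact mem_union_left _ (by rw [mem_NR, ← h]; exact mem_NL.1 hw)
      · exact mem_union_right _ (by rw [mem_NR, ← mem_singleton.1 h]; exact mem_NL.1 hw)
    by_cases h1 : ρ = u
    · rw [h1]; exact mem_insert_self _ _
    by_cases h2 : ρ = z
    · rw [h2]; exact mem_insert_of_mem (mem_insert_self _ _)
    refine mem_insert_of_mem (mem_insert_of_mem ?_)
    rw [hX, mem_sdiff, mem_insert, mem_singleton]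
    exact ⟨hρa, by push_neg; exact ⟨h1, h2⟩⟩
  have hPdegsplit : ∀ ρ ∈ P,
      (NL E ρ).card = ((NL E ρ) ∩ T).card + ((NL E ρ) ∩ S).card := by
    intro ρ hρ
    have h1 : NL E ρ = ((NL E ρ) ∩ T) ∪ ((NL E ρ) ∩ S) := by
      rw [← Finset.inter_union_distrib_left]
      exact (Finset.inter_eq_left.2 (hPTS ρ hρ)).symm
    conv_lhs => rw [h1]
    exact Finset.card_union_of_disjoint (Finset.disjoint_of_subset_left inter_subset_right
      (Finset.disjoint_of_subset_right inter_subset_right hTSdisjoint))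
  have hdP : ∑ ρ ∈ P, (NL E ρ).card
      = ∑ ρ ∈ P, ((NL E ρ) ∩ T).card + ∑ ρ ∈ P, ((NL E ρ) ∩ S).card := by
    rw [← Finset.sum_add_distrib]
    exact Finset.sum_congr rfl hPdegsplit
  have hePS : ∑ ρ ∈ P, ((NL E ρ) ∩ S).card = ∑ v ∈ S, ((NR E v) ∩ P).card :=
    sum_NL_inter E P S
  -- S degree sum
  have hSsum : ∑ v ∈ S, (NR E v).card = S.card + ∑ v ∈ S, ((NR E v) ∩ P).card := by
    rw [Finset.sum_congr rfl hSdeg, Finset.sum_add_distrib, Finset.sum_const,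
      smul_eq_mul, mul_one]
  -- cardinalities
  have hcardP : P.card + (X.card + 2) = n := by
    rw [hP, card_sdiff_of_subset (subset_univ _), Finset.card_insert_of_notMem huzX,
      Finset.card_insert_of_notMem hzX]
    have h1 := card_le_univ (insert u (insert z X))
    rw [Finset.card_insert_of_notMem huzX, Finset.card_insert_of_notMem hzX] at h1
    simp only [card_univ, Fintype.card_fin] at h1 ⊢
    omega
  have hcard_ab : (univ \ ({a, b} : Finset (Fin n))).card + 2 = n := by
    rw [card_sdiff_of_subset (subset_univ _), card_pair hne]
    have h1 := card_le_univ ({a, b} : Finset (Fin n))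
    rw [card_pair hne] at h1
    simp only [card_univ, Fintype.card_fin] at h1 ⊢
    omega
  have hcardTS : T.card + S.card + 2 = n := by
    have h0 : T.card + S.card = (univ \ ({a, b} : Finset (Fin n))).card := by
      rw [← Finset.card_union_of_disjoint hTSdisjoint, hTSunion]
    omega
  have hEsum : E.card = ∑ x : Fin n, (NL E x).card := card_eq_sum_NL E
  have hPsum2 : 2 * P.card ≤ ∑ x ∈ P, (NL E x).card := by
    calc 2 * P.card = ∑ _x ∈ P, 2 := by rw [Finset.sum_const, smul_eq_mul, mul_comm]
      _ ≤ _ := Finset.sum_le_sum (fun x _ => hL2 x)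
  -- numeric consequences (A) and (B)
  have hA : P.card + 1 ≤ S.card := by omega
  have hB : ∑ ρ ∈ P, (NL E ρ).card + 1 ≤ S.card + P.card := by omega
  -- S2 : degree-2 vertices of S
  set S2 : Finset (Fin n) := S.filter (fun v => (NR E v).card = 2) with hS2
  have hS2sub : S2 ⊆ S := Finset.filter_subset _ _
  have hs2count : 2 * S.card ≤ S2.card + ∑ v ∈ S, ((NR E v) ∩ P).card := by
    have hsd : ∑ v ∈ S \ S2, (NR E v).card + ∑ v ∈ S2, (NR E v).card
        = ∑ v ∈ S, (NR E v).card := Finset.sum_sdiff hS2sub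
    have h1 : 3 * (S \ S2).card ≤ ∑ v ∈ S \ S2, (NR E v).card := by
      calc 3 * (S \ S2).card = ∑ _v ∈ S \ S2, 3 := by
            rw [Finset.sum_const, smul_eq_mul, mul_comm]
        _ ≤ _ := Finset.sum_le_sum (fun v hv => by
            rw [mem_sdiff] at hv
            have h2 := hR2 v
            have h3 : (NR E v).card ≠ 2 := by
              intro h
              exact hv.2 (by rw [hS2, mem_filter]; exact ⟨hv.1, h⟩)
            omega)
    have h2 : 2 * S2.card ≤ ∑ v ∈ S2, (NR E v).card := by
      calc 2 * S2.card = ∑ _v ∈ S2, 2 := by rw [Finset.sum_const, smul_eq_mul, mul_comm]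
        _ ≤ _ := Finset.sum_le_sum (fun v hv => by
            rw [hS2, mem_filter] at hv
            omega)
    have h3 : (S \ S2).card + S2.card = S.card := by
      rw [card_sdiff_of_subset hS2sub]
      have := card_le_card hS2sub
      omega
    omega
  -- rho function
  have hrhoex : ∀ v : Fin n, ∃ ρ : Fin n, v ∈ S2 → (ρ ∈ P ∧ NR E v = {z, ρ}) := by
    intro v
    by_cases hv : v ∈ S2
    · have hvS : v ∈ S := hS2sub hv
      have hd2 : (NR E v).card = 2 := by
        rw [hS2, mem_filter] at hv
        exact hv.2
      have hc1 : ((NR E v) ∩ P).card = 1 := by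
        have := hSdeg v hvS
        omega
      obtain ⟨ρ, hρeq⟩ := Finset.card_eq_one.1 hc1
      refine ⟨ρ, fun _ => ⟨?_, ?_⟩⟩
      · have : ρ ∈ (NR E v) ∩ P := by rw [hρeq]; exact mem_singleton_self _
        exact (mem_inter.1 this).2
      · have heq : NR E v = insert z ((NR E v) ∩ P) := by
          apply Finset.Subset.antisymm
          · intro x hx
            by_cases hxz : x = z
            · rw [hxz]; exact mem_insert_self _ _
            · refine mem_insert_of_mem (mem_inter.2 ⟨hx, ?_⟩)
              rcases mem_insert.1 (hSP v hvS hx) with h | h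
              · exact absurd h hxz
              · exact h
          · intro x hx
            rcases mem_insert.1 hx with h | h
            · rw [h]; exact hSz v hvS
            · exact (mem_inter.1 h).1
        rw [heq, hρeq]
    · exact ⟨z, fun h => absurd h hv⟩
  choose rho hrho using hrhoex
  have hrhoP : ∀ v ∈ S2, rho v ∈ P := fun v hv => (hrho v hv).1
  have hrhoNR : ∀ v ∈ S2, NR E v = {z, rho v} := fun v hv => (hrho v hv).2
  have hrhoz : ∀ v ∈ S2, z ≠ rho v := by
    intro v hv h
    exact hzP (h ▸ hrhoP v hv)
  -- injectivity of rho on S2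
  have hinj : ∀ v ∈ S2, ∀ v' ∈ S2, rho v = rho v' → v = v' := by
    intro v hv v' hv' heq
    by_contra hnevv
    have hvz : v ∈ NL E z := by
      rw [mem_NL, ← mem_NR]
      exact hSz v (hS2sub hv)
    have hv'z : v' ∈ NL E z := by
      rw [mem_NL, ← mem_NR]
      exact hSz v' (hS2sub hv')
    have hvρ : v ∈ NL E (rho v) := by
      rw [mem_NL, ← mem_NR, hrhoNR v hv]
      exact mem_insert_of_mem (mem_singleton_self _)
    have hv'ρ : v' ∈ NL E (rho v) := by
      rw [mem_NL, ← mem_NR, hrhoNR v' hv', ← heq]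
      exact mem_insert_of_mem (mem_singleton_self _)
    have hIsub : ({v, v'} : Finset (Fin n)) ⊆ NL E z ∩ NL E (rho v) := by
      intro w hw
      rcases mem_insert.1 hw with h | h
      · rw [h]; exact mem_inter.2 ⟨hvz, hvρ⟩
      · rw [mem_singleton.1 h]; exact mem_inter.2 ⟨hv'z, hv'ρ⟩
    have hIeq : ({v, v'} : Finset (Fin n)) = NL E z ∩ NL E (rho v) := by
      refine Finset.eq_of_subset_of_card_le hIsub ?_
      rw [card_pair hnevv]
      exact hcodL z (rho v) (hrhoz v hv)
    have := master_light (E := sw E) hchar' hL2' v z (rho v) v'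
      (hrhoz v hv) (by rw [NL_sw]; exact hrhoNR v hv)
      (by rw [NR_sw, NR_sw]; exact hIeq.symm) hnevv
    rw [card_sw, NL_sw] at this
    have hd2 : (NR E v').card = 2 := by
      have := hv'
      rw [hS2, mem_filter] at this
      exact this.2
    omega
  -- bad set
  set B : Finset (Fin n) := S2.filter (fun v => ((NL E (rho v)) ∩ T).Nonempty) with hB2
  have hBcard : B.card ≤ ∑ ρ ∈ P, ((NL E ρ) ∩ T).card := by
    have himg : B.card ≤ (P.filter (fun ρ => ((NL E ρ) ∩ T).Nonempty)).card := by
      refine Finset.card_le_card_of_injOn rho ?_ ?_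
      · intro v hv
        rw [Finset.mem_coe, hB2, mem_filter] at hv
        rw [Finset.mem_coe, mem_filter]
        exact ⟨hrhoP v hv.1, hv.2⟩
      · intro x hx y hy hxy
        rw [Finset.mem_coe, hB2, mem_filter] at hx hy
        exact hinj x hx.1 y hy.1 hxy
    have hfil : (P.filter (fun ρ => ((NL E ρ) ∩ T).Nonempty)).card
        ≤ ∑ ρ ∈ P, ((NL E ρ) ∩ T).card := by
      calc (P.filter (fun ρ => ((NL E ρ) ∩ T).Nonempty)).card
          = ∑ _ρ ∈ P.filter (fun ρ => ((NL E ρ) ∩ T).Nonempty), 1 := by simp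
        _ ≤ ∑ ρ ∈ P.filter (fun ρ => ((NL E ρ) ∩ T).Nonempty), ((NL E ρ) ∩ T).card :=
            Finset.sum_le_sum (fun ρ hρ => by
              rw [mem_filter] at hρ
              exact card_pos.2 hρ.2)
        _ ≤ _ := Finset.sum_le_sum_of_subset (Finset.filter_subset _ _)
    omega
  -- pick v1
  have hpick : 1 ≤ (S2 \ B).card := by
    have h1 : S2.card ≤ (S2 \ B).card + B.card := Finset.card_le_card_sdiff_add_card
    have h2 : B.card < S2.card := by
      have e1 := hs2count
      have e2 := hSsum
      have e3 := hePS
      have e4 := hdP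
      have e5 := hB
      have e6 := hA
      omega
    omega
  obtain ⟨v1, hv1⟩ := Finset.card_pos.1 hpick
  rw [mem_sdiff] at hv1
  have hv1S2 : v1 ∈ S2 := hv1.1
  have hv1T : (NL E (rho v1)) ∩ T = ∅ := by
    have hnn : ¬ ((NL E (rho v1)) ∩ T).Nonempty := by
      intro hne2
      exact hv1.2 (by rw [hB2, mem_filter]; exact ⟨hv1S2, hne2⟩)
    exact Finset.not_nonempty_iff_eq_empty.1 hnn
  have hρ1P : rho v1 ∈ P := hrhoP v1 hv1S2
  have hNRv1 : NR E v1 = {z, rho v1} := hrhoNR v1 hv1S2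
  have hNLρ1S : NL E (rho v1) ⊆ S := by
    intro w hw
    rcases mem_union.1 (hPTS (rho v1) hρ1P hw) with h | h
    · exfalso
      have hmem : w ∈ NL E (rho v1) ∩ T := mem_inter.2 ⟨hw, h⟩
      rw [hv1T] at hmem
      exact absurd hmem (Finset.notMem_empty _)
    · exact h
  have hNLρ1z : NL E (rho v1) ⊆ NL E z := by
    intro w hw
    rw [mem_NL, ← mem_NR]
    exact hSz w (hNLρ1S hw)
  have hρ1z : rho v1 ≠ z := fun h => hzP (h ▸ hρ1P)
  have hcard2 : (NL E (rho v1)).card = 2 := by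
    have hle : (NL E (rho v1)).card ≤ 2 := by
      have h1 : NL E (rho v1) ∩ NL E z = NL E (rho v1) := Finset.inter_eq_left.2 hNLρ1z
      have h2 := hcodL (rho v1) z hρ1z
      rw [h1] at h2
      exact h2
    have := hL2 (rho v1)
    omega
  have hv1ρ1 : v1 ∈ NL E (rho v1) := by
    rw [mem_NL, ← mem_NR, hNRv1]
    exact mem_insert_of_mem (mem_singleton_self _)
  obtain ⟨z2, hz2mem, hz2ne⟩ := exists_other hcard2 hv1ρ1
  have hne12 : v1 ≠ z2 := fun h => hz2ne h.symm
  have hNLρ1eq : ({v1, z2} : Finset (Fin n)) = NL E (rho v1) := by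
    refine Finset.eq_of_subset_of_card_le ?_ (by rw [hcard2, card_pair hne12])
    intro w hw
    rcases mem_insert.1 hw with h | h
    · rw [h]; exact hv1ρ1
    · rw [mem_singleton.1 h]; exact hz2mem
  have hz2S : z2 ∈ S := hNLρ1S hz2mem
  have hInter : NL E z ∩ NL E (rho v1) = {v1, z2} := by
    rw [Finset.inter_eq_right.2 hNLρ1z]
    exact hNLρ1eq.symm
  have hminapp := hmin v1 z (rho v1) z2 hNRv1 (hrhoz v1 hv1S2) hInter hne12
  have hz2deg : (NR E z2).card ≤ 1 + P.card := by
    have hsubz2 := hSP z2 hz2S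
    have h1 := card_le_card hsubz2
    have h2 : (insert z P).card ≤ P.card + 1 := Finset.card_insert_le _ _
    omega
  omega

end K23
-- induction wrapper and main theorem
namespace K23
variable {n : ℕ}

lemma main_ind : ∀ (k : ℕ) {n : ℕ} (E : Finset (Fin n × Fin n)),
    SatChar E → CodegL E → CodegR E →
    (∀ x, 2 ≤ (NL E x).card) → (∀ v, 2 ≤ (NR E v).card) →
    ∀ u a b z : Fin n, a ≠ b → NL E u = {a, b} →
    NR E a ∩ NR E b = {u, z} → u ≠ z → (NL E z).card ≤ k →
    3 * n ≤ E.card + 2 := by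
  intro k
  induction k with
  | zero =>
    intro n E hchar _ _ hL2 _ u a b z hne hab habz huz hk
    exfalso
    have := hL2 z
    omega
  | succ k ih =>
    intro n E hchar hcodL hcodR hL2 hR2 u a b z hne hab habz huz hk
    by_cases hmin : ∀ v x y w : Fin n, NR E v = {x, y} → x ≠ y →
        NL E x ∩ NL E y = {v, w} → v ≠ w → (NL E z).card ≤ (NR E w).card
    · exact main_case hchar hcodL (satChar_sw hchar) hL2 hR2 u a b z hne hab habz huz hmin
    · push_neg at hmin
      obtain ⟨v, x, y, w, h1, h2, h3, h4, h5⟩ := hmin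
      have hres := ih (sw E) (satChar_sw hchar) (codegL_sw hcodR) (codegR_sw hcodL)
        (fun t => by rw [NL_sw]; exact hR2 t) (fun t => by rw [NR_sw]; exact hL2 t)
        v x y w h2 (by rw [NL_sw]; exact h1)
        (by rw [NR_sw, NR_sw]; exact h3) h4
        (by rw [NL_sw]; omega)
      rwa [card_sw] at hres

theorem main_thm (hn : 4 ≤ n) (E : Finset (Fin n × Fin n)) (hsat : Saturated 2 3 E) :
    3 * n - 2 ≤ E.card := by
  classical
  by_contra hcon
  push_neg at hcon
  have hfree1 : ¬ containsK E 2 3 := fun h => hsat.1 (Or.inl h)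
  have hfree2 : ¬ containsK E 3 2 := fun h => hsat.1 (Or.inr h)
  have hcodL := codegL_of_free hfree1
  have hcodR := codegR_of_free hfree2
  have hchar := satChar hsat
  have hn1 : 1 ≤ n := by omega
  have hL1 : ∀ x, 1 ≤ (NL E x).card := degL_pos hn1 hchar
  have hR1 : ∀ v, 1 ≤ (NR E v).card := by
    intro v
    have := degL_pos hn1 (satChar_sw hchar) v
    rwa [NL_sw] at this
  have hL2 : ∀ x, 2 ≤ (NL E x).card := by
    intro x
    by_contra h
    push_neg at h
    have h1 : (NL E x).card = 1 := by have := hL1 x; omega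
    obtain ⟨w, hw⟩ := Finset.card_eq_one.1 h1
    have := deg_one_case hn1 hchar hL1 x w hw
    omega
  have hR2 : ∀ v, 2 ≤ (NR E v).card := by
    intro v
    by_contra h
    push_neg at h
    have h1 : (NR E v).card = 1 := by have := hR1 v; omega
    obtain ⟨w, hw⟩ := Finset.card_eq_one.1 h1
    have := deg_one_case (E := sw E) hn1 (satChar_sw hchar)
      (fun t => by rw [NL_sw]; exact hR1 t) v w (by rw [NL_sw]; exact hw)
    rw [card_sw] at this
    omega
  have hex : ∃ u, (NL E u).card = 2 := by
    by_contra h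
    push_neg at h
    have h3 : ∀ x : Fin n, 3 ≤ (NL E x).card := by
      intro x
      have := hL2 x
      have := h x
      omega
    have hsum : 3 * n ≤ ∑ x : Fin n, (NL E x).card := by
      calc 3 * n = ∑ _x : Fin n, 3 := by
            rw [Finset.sum_const, smul_eq_mul, card_univ, Fintype.card_fin, mul_comm]
        _ ≤ _ := Finset.sum_le_sum (fun x _ => h3 x)
    rw [← card_eq_sum_NL] at hsum
    omega
  obtain ⟨u, hu2⟩ := hex
  obtain ⟨a, b, hne, hab⟩ := Finset.card_eq_two.1 hu2
  have hI : u ∈ NR E a ∩ NR E b := by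
    rw [mem_inter, mem_NR, mem_NR]
    constructor
    · have : a ∈ NL E u := by rw [hab]; exact mem_insert_self _ _
      exact mem_NL.1 this
    · have : b ∈ NL E u := by rw [hab]; exact mem_insert_of_mem (mem_singleton_self _)
      exact mem_NL.1 this
  by_cases hsing : NR E a ∩ NR E b = {u}
  · have := no_z_case hchar hL2 hR2 u a b hne hab hsing
    omega
  · obtain ⟨z, hz, hzu⟩ : ∃ z ∈ NR E a ∩ NR E b, z ≠ u := by
      by_contra hcc
      push_neg at hcc
      exact hsing (Finset.Subset.antisymm
        (fun t ht => Finset.mem_singleton.2 (hcc t ht))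
        (Finset.singleton_subset_iff.2 hI))
    have huz : u ≠ z := fun h => hzu h.symm
    have habz : NR E a ∩ NR E b = {u, z} := by
      refine (Finset.eq_of_subset_of_card_le ?_ ?_).symm
      · intro t ht
        rcases mem_insert.1 ht with h | h
        · rw [h]; exact hI
        · rw [mem_singleton.1 h]; exact hz
      · rw [card_pair huz]
        exact hcodR a b hne
    have := main_ind (NL E z).card E hchar hcodL hcodR hL2 hR2 u a b z hne hab habz
      huz le_rfl
    omega

end K23

theorem stmt4 (n : ℕ) (hn : 4 ≤ n)
    (E : Finset (Fin n × Fin n)) (hsat : Saturated 2 3 E) :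
    3 * n - 2 ≤ E.card :=
  K23.main_thm hn E hsat
end

section
/- If a K_{2,3}-saturated n-by-n bipartite graph (n ≥ 4) contains fewer than 3n-2 edges, then it has minimum degree exactly 2, and moreover there exist non-adjacent vertices u₀ ∈ U and u₀' ∈ U' both of degree 2. -/
open Finset

section Aux
variable {n : ℕ}

def swapE (E : Finset (Fin n × Fin n)) : Finset (Fin n × Fin n) :=
  E.map (Equiv.prodComm (Fin n) (Fin n)).toEmbedding

lemma mem_swapE {E : Finset (Fin n × Fin n)} {a b : Fin n} :
    (a, b) ∈ swapE E ↔ (b, a) ∈ E := by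
  simp [swapE, Finset.mem_map_equiv]

lemma card_swapE (E : Finset (Fin n × Fin n)) : (swapE E).card = E.card :=
  Finset.card_map _

lemma containsK_swapE {E : Finset (Fin n × Fin n)} {a b : ℕ} :
    containsK (swapE E) a b ↔ containsK E b a := by
  constructor
  · rintro ⟨S, T, hS, hT, h⟩
    exact ⟨T, S, hT, hS, fun v hv u hu => mem_swapE.1 (h u hu v hv)⟩
  · rintro ⟨S, T, hS, hT, h⟩
    exact ⟨T, S, hT, hS, fun v hv u hu => mem_swapE.2 (h u hu v hv)⟩

lemma swapE_insert (E : Finset (Fin n × Fin n)) (u v : Fin n) :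
    swapE (insert (u, v) E) = insert (v, u) (swapE E) := by
  simp [swapE, Finset.map_insert, Equiv.prodComm]

lemma saturated_swapE {E : Finset (Fin n × Fin n)} (h : Saturated 2 3 E) :
    Saturated 2 3 (swapE E) := by
  obtain ⟨h1, h2⟩ := h
  constructor
  · rw [containsK_swapE, containsK_swapE]; tauto
  · intro u v huv
    rw [mem_swapE] at huv
    have := h2 v u huv
    rw [← swapE_insert] at *
    rw [containsK_swapE, containsK_swapE]
    tauto

lemma degL_swapE (E : Finset (Fin n × Fin n)) (u : Fin n) :
    degL (swapE E) u = degR E u := by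
  unfold degL degR swapE
  rw [Finset.filter_map]
  rw [Finset.card_map]
  congr 1

end Aux

section Aux
variable {n : ℕ}

/-- A new copy created by inserting (u,v) must use the edge (u,v). -/
lemma copy_new_edge {E : Finset (Fin n × Fin n)} {u v : Fin n} {a b : ℕ}
    (hfree : ¬ containsK E a b) (h : containsK (insert (u, v) E) a b) :
    ∃ S T : Finset (Fin n), S.card = a ∧ T.card = b ∧ u ∈ S ∧ v ∈ T ∧
      ∀ x ∈ S, ∀ y ∈ T, (x, y) = (u, v) ∨ (x, y) ∈ E := by
  obtain ⟨S, T, hS, hT, hh⟩ := h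
  have key : ∀ x ∈ S, ∀ y ∈ T, (x, y) = (u, v) ∨ (x, y) ∈ E := by
    intro x hx y hy
    have := hh x hx y hy
    rw [Finset.mem_insert] at this
    exact this
  by_cases huS : u ∈ S
  · by_cases hvT : v ∈ T
    · exact ⟨S, T, hS, hT, huS, hvT, key⟩
    · exfalso
      refine hfree ⟨S, T, hS, hT, fun x hx y hy => ?_⟩
      rcases key x hx y hy with h' | h'
      · exact absurd (by rw [Prod.ext_iff] at h'; simp only [] at h'; rw [← h'.2]; exact hy) hvT
      · exact h'
  · exfalso
    refine hfree ⟨S, T, hS, hT, fun x hx y hy => ?_⟩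
    rcases key x hx y hy with h' | h'
    · exact absurd (by rw [Prod.ext_iff] at h'; simp only [] at h'; rw [← h'.1]; exact hx) huS
    · exact h'

/-- Package: missing edge gives a copy through (u,v), in one of the two shapes. -/
lemma copy' {E : Finset (Fin n × Fin n)} {u v : Fin n}
    (hsat : Saturated 2 3 E) (huv : (u, v) ∉ E) :
    ∃ S T : Finset (Fin n),
      ((S.card = 2 ∧ T.card = 3) ∨ (S.card = 3 ∧ T.card = 2)) ∧ u ∈ S ∧ v ∈ T ∧
      ∀ x ∈ S, ∀ y ∈ T, (x, y) = (u, v) ∨ (x, y) ∈ E := by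
  obtain ⟨h1, h2⟩ := hsat
  rcases h2 u v huv with h | h
  · obtain ⟨S, T, hS, hT, hu', hv', hall⟩ := copy_new_edge (fun c => h1 (Or.inl c)) h
    exact ⟨S, T, Or.inl ⟨hS, hT⟩, hu', hv', hall⟩
  · obtain ⟨S, T, hS, hT, hu', hv', hall⟩ := copy_new_edge (fun c => h1 (Or.inr c)) h
    exact ⟨S, T, Or.inr ⟨hS, hT⟩, hu', hv', hall⟩

lemma degL_pos (hn : 1 ≤ n) {E : Finset (Fin n × Fin n)}
    (hsat : Saturated 2 3 E) (u : Fin n) : 1 ≤ degL E u := by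
  rw [Nat.one_le_iff_ne_zero]
  intro h0
  have hno : ∀ v, (u, v) ∉ E := by
    intro v hv
    have hmem : (u, v) ∈ E.filter (fun p => p.1 = u) := by
      simp [Finset.mem_filter, hv]
    unfold degL at h0
    rw [Finset.card_eq_zero] at h0
    rw [h0] at hmem
    exact absurd hmem (Finset.notMem_empty _)
  obtain ⟨S, T, hcard, huS, hvT, hall⟩ := copy' hsat (hno ⟨0, hn⟩)
  have hT : T ⊆ {(⟨0, hn⟩ : Fin n)} := by
    intro y hy
    rcases hall u huS y hy with h' | h'
    · rw [Finset.mem_singleton]; exact congrArg Prod.snd h'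
    · exact absurd h' (hno y)
  have := Finset.card_le_card hT
  rw [Finset.card_singleton] at this
  omega

end Aux

section Aux2
variable {n : ℕ}

/-- If u has unique neighbour w, every other right vertex v has two distinct
left vertices adjacent to both w and v. -/
lemma exists_pair {E : Finset (Fin n × Fin n)} {u w : Fin n}
    (hsat : Saturated 2 3 E) (huw : ∀ v, (u, v) ∈ E → v = w)
    {v : Fin n} (hvw : v ≠ w) (huv : (u, v) ∉ E) :
    ∃ u1 u2 : Fin n, u1 ≠ u2 ∧ (u1, w) ∈ E ∧ (u1, v) ∈ E ∧ (u2, w) ∈ E ∧ (u2, v) ∈ E := by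
  obtain ⟨S, T, hcard, huS, hvT, hall⟩ := copy' hsat huv
  -- T ⊆ {v, w}
  have hTsub : T ⊆ {v, w} := by
    intro y hy
    rcases hall u huS y hy with h' | h'
    · simp [Prod.ext_iff] at h'
      simp [h']
    · have := huw y h'
      simp [this]
  have hT2 : T.card ≤ 2 := le_trans (Finset.card_le_card hTsub)
    ((Finset.card_insert_le _ _).trans (by simp))
  rcases hcard with ⟨hS, hT⟩ | ⟨hS, hT⟩
  · omega
  -- T = {v, w}
  have hTeq : T = {v, w} := Finset.eq_of_subset_of_card_le hTsub
    (by rw [Finset.card_insert_of_notMem (by simp [hvw]), Finset.card_singleton, hT])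
  have hwT : w ∈ T := by rw [hTeq]; simp
  -- two elements of S besides u
  have hSe : (S.erase u).card = 2 := by rw [Finset.card_erase_of_mem huS, hS]
  obtain ⟨u1, hu1, u2, hu2, h12⟩ := Finset.one_lt_card.1 (by omega : 1 < (S.erase u).card)
  have hu1u : u1 ≠ u := Finset.ne_of_mem_erase hu1
  have hu2u : u2 ≠ u := Finset.ne_of_mem_erase hu2
  have hu1S : u1 ∈ S := Finset.mem_of_mem_erase hu1
  have hu2S : u2 ∈ S := Finset.mem_of_mem_erase hu2
  have edge : ∀ x ∈ S, x ≠ u → ∀ y ∈ T, (x, y) ∈ E := by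
    intro x hx hxu y hy
    rcases hall x hx y hy with h' | h'
    · exact absurd (congrArg Prod.fst h') hxu
    · exact h'
  exact ⟨u1, u2, h12, edge u1 hu1S hu1u w hwT, edge u1 hu1S hu1u v hvT,
    edge u2 hu2S hu2u w hwT, edge u2 hu2S hu2u v hvT⟩

end Aux2

section Aux3
variable {n : ℕ}

/-- If some left vertex has degree exactly 1, the graph has at least 3n-2 edges. -/
lemma card_lower {E : Finset (Fin n × Fin n)} (hn : 4 ≤ n)
    (hsat : Saturated 2 3 E) {u : Fin n} (h1 : degL E u = 1) :
    3 * n - 2 ≤ E.card := by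
  -- extract the unique neighbour w
  unfold degL at h1
  rw [Finset.card_eq_one] at h1
  obtain ⟨e, he⟩ := h1
  have heE : e ∈ E ∧ e.1 = u := by
    have : e ∈ E.filter (fun p => p.1 = u) := by rw [he]; simp
    simpa using this
  set w := e.2 with hw
  have huwE : (u, w) ∈ E := by rw [← heE.2, hw]; exact heE.1
  have huw : ∀ v, (u, v) ∈ E → v = w := by
    intro v hv
    have : (u, v) ∈ E.filter (fun p => p.1 = u) := by simp [hv]
    rw [he, Finset.mem_singleton] at this
    exact congrArg Prod.snd this
  classical
  set D : Finset (Fin n) := univ.filter (fun x => (x, w) ∈ E) with hD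
  set S0 : Finset (Fin n) := univ.filter (fun x => (x, w) ∉ E) with hS0
  have hDS0 : D.card + S0.card = n := by
    rw [hD, hS0, Finset.card_filter_add_card_filter_not]
    simp
  set Ea := E.filter (fun p => (p.1, w) ∈ E) with hEa
  set Eb := E.filter (fun p => (p.1, w) ∉ E) with hEb
  have hEab : Ea.card + Eb.card = E.card := by
    rw [hEa, hEb]; exact Finset.card_filter_add_card_filter_not _
  -- Ea fiberwise over the right endpoint
  have hEafib : Ea.card = ∑ v ∈ univ, (Ea.filter (fun p => p.2 = v)).card :=
    Finset.card_eq_sum_card_fiberwise (fun p _ => Finset.mem_univ p.2)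
  -- fiber at w of Ea is all of E's fiber
  have hfibw : Ea.filter (fun p => p.2 = w) = E.filter (fun p => p.2 = w) := by
    ext p
    simp only [hEa, Finset.mem_filter, Finset.filter_filter]
    constructor
    · tauto
    · rintro ⟨hp, hpw⟩
      refine ⟨hp, ?_, hpw⟩
      rw [← hpw]
      simpa using hp
  -- degR w = D.card
  have hdD : (E.filter (fun p => p.2 = w)).card = D.card := by
    have himg : D.image (fun x => (x, w)) = E.filter (fun p => p.2 = w) := by
      ext p
      simp only [hD, Finset.mem_image, Finset.mem_filter, Finset.mem_univ, true_and]
      constructor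
      · rintro ⟨x, hx, rfl⟩; exact ⟨hx, rfl⟩
      · rintro ⟨hp, hpw⟩
        exact ⟨p.1, by rw [← hpw] at *; simpa using hp, by rw [← hpw]⟩
    rw [← himg, Finset.card_image_of_injective]
    intro x y hxy
    exact congrArg Prod.fst hxy
  -- fiber at v ≠ w has at least 2 elements
  have hfib2 : ∀ v ∈ univ.erase w, 2 ≤ (Ea.filter (fun p => p.2 = v)).card := by
    intro v hv
    have hvw : v ≠ w := Finset.ne_of_mem_erase hv
    have huvE : (u, v) ∉ E := fun hc => hvw (huw v hc)
    obtain ⟨u1, u2, h12, h1w, h1v, h2w, h2v⟩ := exists_pair hsat huw hvw huvE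
    have hsub : {(u1, v), (u2, v)} ⊆ Ea.filter (fun p => p.2 = v) := by
      intro p hp
      simp only [Finset.mem_insert, Finset.mem_singleton] at hp
      rcases hp with rfl | rfl <;> simp [hEa, Finset.mem_filter, h1v, h1w, h2v, h2w]
    have hc2 : ({(u1, v), (u2, v)} : Finset (Fin n × Fin n)).card = 2 := by
      rw [Finset.card_insert_of_notMem (by simp [h12]), Finset.card_singleton]
    calc 2 = ({(u1, v), (u2, v)} : Finset (Fin n × Fin n)).card := hc2.symm
    _ ≤ _ := Finset.card_le_card hsub
  -- lower bound for Ea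
  have hEalb : 2 * (n - 1) + D.card ≤ Ea.card := by
    rw [hEafib, ← Finset.sum_erase_add univ _ (Finset.mem_univ w), hfibw, hdD]
    have : (univ.erase w).card * 2 ≤ ∑ v ∈ univ.erase w, (Ea.filter (fun p => p.2 = v)).card := by
      calc (univ.erase w).card * 2 = ∑ _v ∈ univ.erase w, 2 := by rw [Finset.sum_const, smul_eq_mul]
      _ ≤ _ := Finset.sum_le_sum hfib2
    have hce : (univ.erase w).card = n - 1 := by
      rw [Finset.card_erase_of_mem (Finset.mem_univ w), Finset.card_univ, Fintype.card_fin]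
    rw [hce] at this
    omega
  -- lower bound for Eb
  have hEblb : S0.card ≤ Eb.card := by
    have hfibb : Eb.card = ∑ x ∈ univ, (Eb.filter (fun p => p.1 = x)).card :=
      Finset.card_eq_sum_card_fiberwise (fun p _ => Finset.mem_univ p.1)
    have h1e : ∀ x ∈ S0, 1 ≤ (Eb.filter (fun p => p.1 = x)).card := by
      intro x hx
      rw [hS0, Finset.mem_filter] at hx
      have hdx := degL_pos (by omega) hsat x
      unfold degL at hdx
      have hne : (E.filter (fun p => p.1 = x)).Nonempty := Finset.card_pos.mp (by omega)
      obtain ⟨p, hp⟩ := hne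
      rw [Finset.mem_filter] at hp
      have : p ∈ Eb.filter (fun p => p.1 = x) := by
        simp only [hEb, Finset.mem_filter]
        refine ⟨⟨hp.1, ?_⟩, hp.2⟩
        rw [hp.2]; exact hx.2
      exact Finset.card_pos.mpr ⟨p, this⟩
    calc S0.card = ∑ _x ∈ S0, 1 := by rw [Finset.sum_const, smul_eq_mul, mul_one]
    _ ≤ ∑ x ∈ S0, (Eb.filter (fun p => p.1 = x)).card := Finset.sum_le_sum h1e
    _ ≤ ∑ x ∈ univ, (Eb.filter (fun p => p.1 = x)).card :=
        Finset.sum_le_sum_of_subset (Finset.subset_univ S0)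
    _ = Eb.card := hfibb.symm
  omega

end Aux3

section Aux4
variable {n : ℕ}

lemma two_le_degL {E : Finset (Fin n × Fin n)} (hn : 4 ≤ n)
    (hsat : Saturated 2 3 E) (hfew : E.card < 3 * n - 2) (u : Fin n) :
    2 ≤ degL E u := by
  by_contra h
  have h1 : degL E u = 1 := le_antisymm (by omega) (degL_pos (by omega) hsat u)
  have := card_lower hn hsat h1
  omega

lemma two_le_degR {E : Finset (Fin n × Fin n)} (hn : 4 ≤ n)
    (hsat : Saturated 2 3 E) (hfew : E.card < 3 * n - 2) (v : Fin n) :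
    2 ≤ degR E v := by
  rw [← degL_swapE]
  exact two_le_degL hn (saturated_swapE hsat) (by rw [card_swapE]; exact hfew) v

lemma card_eq_sum_degL (E : Finset (Fin n × Fin n)) :
    E.card = ∑ u ∈ univ, degL E u :=
  Finset.card_eq_sum_card_fiberwise (fun p _ => Finset.mem_univ p.1)

/-- At least three left vertices of degree exactly 2. -/
lemma three_le_A {E : Finset (Fin n × Fin n)} (hn : 4 ≤ n)
    (hsat : Saturated 2 3 E) (hfew : E.card < 3 * n - 2) :
    3 ≤ (univ.filter (fun u => degL E u = 2)).card := by
  classical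
  set A := univ.filter (fun u => degL E u = 2) with hA
  set Ac := univ.filter (fun u => ¬ degL E u = 2) with hAc
  have hsplit : A.card + Ac.card = n := by
    rw [hA, hAc, Finset.card_filter_add_card_filter_not]; simp
  have hsum : ∑ u ∈ univ, degL E u = ∑ u ∈ A, degL E u + ∑ u ∈ Ac, degL E u := by
    rw [hA, hAc]; exact (Finset.sum_filter_add_sum_filter_not _ _ _).symm
  have hAsum : ∑ u ∈ A, degL E u = 2 * A.card := by
    have hmem : ∀ u ∈ A, degL E u = 2 := fun u hu => (Finset.mem_filter.1 hu).2
    calc ∑ u ∈ A, degL E u = ∑ _u ∈ A, 2 := Finset.sum_congr rfl hmem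
    _ = 2 * A.card := by rw [Finset.sum_const, smul_eq_mul, mul_comm]
  have hAcsum : 3 * Ac.card ≤ ∑ u ∈ Ac, degL E u := by
    calc 3 * Ac.card = ∑ _u ∈ Ac, 3 := by rw [Finset.sum_const, smul_eq_mul, mul_comm]
    _ ≤ _ := Finset.sum_le_sum (fun u hu => by
        rw [hAc, Finset.mem_filter] at hu
        have := two_le_degL hn hsat hfew u
        omega)
  have hE := card_eq_sum_degL E
  omega

end Aux4

theorem stmt5 (n : ℕ) (hn : 4 ≤ n)
    (E : Finset (Fin n × Fin n)) (hsat : Saturated 2 3 E)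
    (hfew : E.card < 3 * n - 2) :
    (∀ u : Fin n, 2 ≤ degL E u) ∧ (∀ v : Fin n, 2 ≤ degR E v) ∧
      ∃ u₀ v₀ : Fin n, (u₀, v₀) ∉ E ∧ degL E u₀ = 2 ∧ degR E v₀ = 2 := by
  classical
  refine ⟨two_le_degL hn hsat hfew, two_le_degR hn hsat hfew, ?_⟩
  set A := univ.filter (fun u => degL E u = 2) with hA
  set B := univ.filter (fun v => degR E v = 2) with hB
  have hAcard : 3 ≤ A.card := three_le_A hn hsat hfew
  have hBcard : 3 ≤ B.card := by
    have h3 : 3 ≤ (univ.filter (fun v => degL (swapE E) v = 2)).card :=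
      three_le_A hn (saturated_swapE hsat) (by rw [card_swapE]; exact hfew)
    have : (univ.filter fun v => degL (swapE E) v = 2) = B := by
      apply Finset.filter_congr
      intro v _
      rw [degL_swapE]
    rw [← this]
    exact h3
  by_contra hcon
  push_neg at hcon
  have hall : ∀ a ∈ A, ∀ b ∈ B, (a, b) ∈ E := by
    intro a ha b hb
    rw [hA, Finset.mem_filter] at ha
    rw [hB, Finset.mem_filter] at hb
    by_contra hab
    exact absurd hb.2 (by have := hcon a b hab ha.2; omega)
  obtain ⟨S, hSA, hScard⟩ := Finset.exists_subset_card_eq (show 3 ≤ A.card from hAcard)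
  obtain ⟨T, hTB, hTcard⟩ := Finset.exists_subset_card_eq (show 2 ≤ B.card by omega)
  exact hsat.1 (Or.inr ⟨S, T, hScard, hTcard,
    fun x hx y hy => hall x (hSA hx) y (hTB hy)⟩)
end

section
/- For every n ≥ t ≥ 1, every K_{1,t}-saturated n-by-n bipartite graph contains at least (t-1)n - ⌊((t-1)/2)^2⌋ edges. -/
open Finset

lemma card_nbrL {n : ℕ} (E : Finset (Fin n × Fin n)) (u : Fin n) :
    ((E.filter fun p => p.1 = u).image Prod.snd).card = degL E u := by
  apply Finset.card_image_of_injOn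
  intro p hp q hq h
  simp only [coe_filter, Set.mem_setOf_eq] at hp hq
  exact Prod.ext (hp.2.trans hq.2.symm) h

lemma card_nbrR {n : ℕ} (E : Finset (Fin n × Fin n)) (v : Fin n) :
    ((E.filter fun p => p.2 = v).image Prod.fst).card = degR E v := by
  apply Finset.card_image_of_injOn
  intro p hp q hq h
  simp only [coe_filter, Set.mem_setOf_eq] at hp hq
  exact Prod.ext h (hp.2.trans hq.2.symm)

lemma containsK_one_iff {n t : ℕ} (E : Finset (Fin n × Fin n)) :
    containsK E 1 t ↔ ∃ u, t ≤ degL E u := by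
  constructor
  · rintro ⟨S, T, hS, hT, hE⟩
    obtain ⟨u, rfl⟩ := Finset.card_eq_one.1 hS
    refine ⟨u, ?_⟩
    rw [← hT, ← card_nbrL E u]
    apply Finset.card_le_card
    intro v hv
    exact Finset.mem_image.2 ⟨(u, v), mem_filter.2 ⟨hE u (mem_singleton_self u) v hv, rfl⟩, rfl⟩
  · rintro ⟨u, hu⟩
    rw [← card_nbrL E u] at hu
    obtain ⟨T, hTsub, hT⟩ := Finset.exists_subset_card_eq hu
    refine ⟨{u}, T, Finset.card_singleton u, hT, ?_⟩
    intro a ha v hv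
    rw [mem_singleton] at ha
    subst ha
    obtain ⟨p, hp, hpv⟩ := Finset.mem_image.1 (hTsub hv)
    rw [mem_filter] at hp
    have : p = (a, v) := Prod.ext hp.2 hpv
    rw [← this]; exact hp.1

lemma containsK_one_iff' {n t : ℕ} (E : Finset (Fin n × Fin n)) :
    containsK E t 1 ↔ ∃ v, t ≤ degR E v := by
  constructor
  · rintro ⟨S, T, hS, hT, hE⟩
    obtain ⟨v, rfl⟩ := Finset.card_eq_one.1 hT
    refine ⟨v, ?_⟩
    rw [← hS, ← card_nbrR E v]
    apply Finset.card_le_card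
    intro u hu
    exact Finset.mem_image.2 ⟨(u, v), mem_filter.2 ⟨hE u hu v (mem_singleton_self v), rfl⟩, rfl⟩
  · rintro ⟨v, hv⟩
    rw [← card_nbrR E v] at hv
    obtain ⟨S, hSsub, hS⟩ := Finset.exists_subset_card_eq hv
    refine ⟨S, {v}, hS, Finset.card_singleton v, ?_⟩
    intro u hu b hb
    rw [mem_singleton] at hb
    subst hb
    obtain ⟨p, hp, hpu⟩ := Finset.mem_image.1 (hSsub hu)
    rw [mem_filter] at hp
    have : p = (u, b) := Prod.ext hpu hp.2
    rw [← this]; exact hp.1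

set_option maxHeartbeats 1000000 in
/-- The key counting lemma, stated asymmetrically (assuming the set of left vertices of
non-maximal degree is at most as big as the right one). -/
lemma aux_count {n t : ℕ} (E : Finset (Fin n × Fin n))
    (hL : ∀ u, degL E u ≤ t - 1)
    (hadd : ∀ u v, (u, v) ∉ E → degL E u = t - 1 ∨ degR E v = t - 1)
    (hxy : (univ.filter fun u => ¬ (degL E u = t - 1)).card ≤
           (univ.filter fun v => ¬ (degR E v = t - 1)).card) :
    ((t - 1 : ℕ) : ℤ) * n - (((t - 1) ^ 2 / 4 : ℕ) : ℤ) ≤ (E.card : ℤ) := by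
  classical
  set X := univ.filter fun u : Fin n => ¬ (degL E u = t - 1) with hX
  set Y := univ.filter fun v : Fin n => ¬ (degR E v = t - 1) with hY
  -- each u ∈ X is joined to every v ∈ Y
  have hdegY : ∀ u ∈ X, Y.card ≤ degL E u := by
    intro u hu
    have h1 : ∀ v ∈ Y, (u, v) ∈ E := by
      intro v hv
      by_contra h
      rcases hadd u v h with h' | h'
      · exact (mem_filter.1 hu).2 h'
      · exact (mem_filter.1 hv).2 h'
    apply Finset.card_le_card_of_injOn (fun v => (u, v))
    · intro v hv
      exact mem_filter.2 ⟨h1 v hv, rfl⟩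
    · intro a _ b _ h
      exact (Prod.mk.injEq _ _ _ _ ▸ h).2
  -- edge count
  have hsum : E.card = ∑ u, degL E u :=
    Finset.card_eq_sum_card_fiberwise (fun p _ => mem_univ p.1)
  have hsplit := Finset.sum_filter_add_sum_filter_not univ
    (fun u : Fin n => ¬ (degL E u = t - 1)) (degL E)
  have hconst : ∑ u ∈ univ.filter (fun u : Fin n => ¬ ¬ (degL E u = t - 1)), degL E u
      = (univ.filter (fun u : Fin n => ¬ ¬ (degL E u = t - 1))).card * (t - 1) := by
    apply Finset.sum_const_nat
    intro u hu
    exact not_not.1 (mem_filter.1 hu).2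
  have hXsum : X.card * Y.card ≤ ∑ u ∈ X, degL E u := by
    have := Finset.card_nsmul_le_sum X (degL E) Y.card hdegY
    simpa [mul_comm] using this
  have hcards : X.card + (univ.filter (fun u : Fin n => ¬ ¬ (degL E u = t - 1))).card = n := by
    rw [hX, Finset.card_filter_add_card_filter_not]
    simp
  have hEge : (univ.filter (fun u : Fin n => ¬ ¬ (degL E u = t - 1))).card * (t - 1)
      + X.card * Y.card ≤ E.card := by
    rw [hsum, ← hsplit, ← hconst, add_comm]
    exact Nat.add_le_add hXsum le_rfl
  -- pass to integers
  have hcn : (X.card : ℤ) + ((univ.filter (fun u : Fin n => ¬ ¬ (degL E u = t - 1))).card : ℤ)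
      = (n : ℤ) := by exact_mod_cast hcards
  have hEge' : ((univ.filter (fun u : Fin n => ¬ ¬ (degL E u = t - 1))).card : ℤ)
      * ((t - 1 : ℕ) : ℤ) + (X.card : ℤ) * (Y.card : ℤ) ≤ (E.card : ℤ) := by
    exact_mod_cast hEge
  have hab : (X.card : ℤ) ≤ (Y.card : ℤ) := by exact_mod_cast hxy
  have hF : (0 : ℤ) ≤ (((t - 1) ^ 2 / 4 : ℕ) : ℤ) := Int.ofNat_nonneg _
  -- main arithmetic
  have hkey : (X.card : ℤ) * ((t - 1 : ℕ) : ℤ)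
      ≤ (X.card : ℤ) * (Y.card : ℤ) + (((t - 1) ^ 2 / 4 : ℕ) : ℤ) := by
    rcases Nat.eq_zero_or_pos X.card with h0 | hpos
    · rw [h0]
      simpa using hF
    · obtain ⟨u, hu⟩ := Finset.card_pos.1 hpos
      have hdu : degL E u ≤ t - 1 := hL u
      have hdu' : degL E u ≠ t - 1 := (mem_filter.1 hu).2
      have hYlt : Y.card < t - 1 := lt_of_le_of_lt (hdegY u hu)
        (lt_of_le_of_ne hdu hdu')
      have hblt : (Y.card : ℤ) < ((t - 1 : ℕ) : ℤ) := by exact_mod_cast hYlt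
      have hA : (0 : ℤ) < (X.card : ℤ) := by exact_mod_cast hpos
      have h1 : (X.card : ℤ) * (((t - 1 : ℕ) : ℤ) - Y.card)
          ≤ (X.card : ℤ) * (((t - 1 : ℕ) : ℤ) - X.card) := by
        apply mul_le_mul_of_nonneg_left (by linarith) (le_of_lt hA)
      have hFm : (((t - 1) ^ 2 / 4 : ℕ) : ℤ) = ((t - 1 : ℕ) : ℤ) ^ 2 / 4 := by
        push_cast [Int.natCast_div]
        norm_num
      have h2 : (X.card : ℤ) * (((t - 1 : ℕ) : ℤ) - X.card)
          ≤ ((t - 1 : ℕ) : ℤ) ^ 2 / 4 := by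
        rw [Int.le_ediv_iff_mul_le (by norm_num : (0:ℤ) < 4)]
        nlinarith [sq_nonneg (((t - 1 : ℕ) : ℤ) - 2 * X.card)]
      rw [hFm]
      nlinarith [h1.trans h2]
  have hn : ((t - 1 : ℕ) : ℤ) * (n : ℤ)
      = ((t - 1 : ℕ) : ℤ) * (X.card : ℤ)
      + ((t - 1 : ℕ) : ℤ) * ((univ.filter (fun u : Fin n => ¬ ¬ (degL E u = t - 1))).card : ℤ) := by
    rw [← hcn]; ring
  nlinarith [hkey, hEge', hn]

lemma mem_swap {n : ℕ} (E : Finset (Fin n × Fin n)) (u v : Fin n) :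
    (u, v) ∈ E.image Prod.swap ↔ (v, u) ∈ E := by
  constructor
  · intro h
    obtain ⟨p, hp, hps⟩ := Finset.mem_image.1 h
    have : p = (v, u) := by
      have := congrArg Prod.swap hps
      simpa using this
    rwa [← this]
  · intro h
    exact Finset.mem_image.2 ⟨(v, u), h, rfl⟩

lemma degR_swap {n : ℕ} (E : Finset (Fin n × Fin n)) (v : Fin n) :
    degR (E.image Prod.swap) v = degL E v := by
  unfold degL degR
  rw [Finset.filter_image, Finset.card_image_of_injective _ Prod.swap_injective]
  rfl

theorem stmt7 (n t : ℕ) (ht : 1 ≤ t) (htn : t ≤ n)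
    (E : Finset (Fin n × Fin n)) (hsat : Saturated 1 t E) :
    ((t - 1 : ℕ) : ℤ) * n - (((t - 1) ^ 2 / 4 : ℕ) : ℤ) ≤ (E.card : ℤ) := by
  classical
  obtain ⟨hno, hins⟩ := hsat
  -- all degrees are at most t - 1
  have hL : ∀ u, degL E u ≤ t - 1 := by
    intro u
    by_contra h
    push_neg at h
    have : t ≤ degL E u := by omega
    exact hno (Or.inl ((containsK_one_iff E).2 ⟨u, this⟩))
  have hR : ∀ v, degR E v ≤ t - 1 := by
    intro v
    by_contra h
    push_neg at h
    have : t ≤ degR E v := by omega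
    exact hno (Or.inr ((containsK_one_iff' E).2 ⟨v, this⟩))
  -- adding a missing edge gives the degree condition
  have hadd : ∀ u v, (u, v) ∉ E → degL E u = t - 1 ∨ degR E v = t - 1 := by
    intro u v huv
    rcases hins u v huv with h | h
    · left
      obtain ⟨w, hw⟩ := (containsK_one_iff _).1 h
      have hwle : degL (insert (u, v) E) w ≤ degL E w + 1 := by
        unfold degL
        rw [Finset.filter_insert]
        split
        · exact Finset.card_insert_le _ _
        · omega
      by_cases hwu : w = u
      · subst hwu
        have := hL w
        omega
      · have heq : degL (insert (u, v) E) w = degL E w := by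
          unfold degL
          rw [Finset.filter_insert, if_neg (by simpa using Ne.symm hwu)]
        rw [heq] at hw
        have := hL w
        omega
    · right
      obtain ⟨w, hw⟩ := (containsK_one_iff' _).1 h
      have hwle : degR (insert (u, v) E) w ≤ degR E w + 1 := by
        unfold degR
        rw [Finset.filter_insert]
        split
        · exact Finset.card_insert_le _ _
        · omega
      by_cases hwv : w = v
      · subst hwv
        have := hR w
        omega
      · have heq : degR (insert (u, v) E) w = degR E w := by
          unfold degR
          rw [Finset.filter_insert, if_neg (by simpa using Ne.symm hwv)]
        rw [heq] at hw
        have := hR w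
        omega
  by_cases hxy : (univ.filter fun u : Fin n => ¬ (degL E u = t - 1)).card ≤
      (univ.filter fun v : Fin n => ¬ (degR E v = t - 1)).card
  · exact aux_count E hL hadd hxy
  · -- swap the graph
    set E' := E.image Prod.swap with hE'
    have hcard : E'.card = E.card := Finset.card_image_of_injective _ Prod.swap_injective
    have hXY : (univ.filter fun u : Fin n => ¬ (degL E' u = t - 1))
        = (univ.filter fun v : Fin n => ¬ (degR E v = t - 1)) := by
      apply Finset.filter_congr
      intro u _
      rw [degL_swap]
    have hYX : (univ.filter fun v : Fin n => ¬ (degR E' v = t - 1))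
        = (univ.filter fun u : Fin n => ¬ (degL E u = t - 1)) := by
      apply Finset.filter_congr
      intro u _
      rw [degR_swap]
    have := aux_count E' (fun u => degL_swap E u ▸ hR u)
      (fun u v h => by
        rw [mem_swap] at h
        rcases hadd v u h with h' | h'
        · right; rw [degR_swap]; exact h'
        · left; rw [degL_swap]; exact h')
      (by rw [hXY, hYX]; omega)
    rwa [hcard] at this
end

section
/- Let G be a K_{s,t}-saturated bipartite graph with parts U, U' and define, for subsets A ⊆ U, A' ⊆ U': B₂' = vertices of U'-A' with at least s-1 but fewer than t-1 neighbors in A and fewer than t-s neighbors in B (where B is defined analogously on the U side, and B₂ ⊆ B is the set of vertices of B with fewer than t-s neighbors in B'), C₂ ⊆ U-A the set of vertices with fewer than s-1 neighbors in A' and fewer than s-1 neighbors outside B₂', and C₂' defined symmetrically. Then every vertex of C₂ is adjacent to every vertex of C₂'. -/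
open Finset

theorem stmt8 (n s t : ℕ) (hs : 1 ≤ s) (hst : s ≤ t)
    (E : Finset (Fin n × Fin n)) (hsat : Saturated s t E)
    (A A' : Finset (Fin n))
    (hshellL : ∀ u : Fin n, u ∉ A → (A'.filter fun v => (u, v) ∈ E).card < t - 1)
    (hshellR : ∀ v : Fin n, v ∉ A' → (A.filter fun u => (u, v) ∈ E).card < t - 1)
    (B B' B₂ B₂' C₂ C₂' : Finset (Fin n))
    (hB : B = (univ \ A).filter fun u => s - 1 ≤ (A'.filter fun v => (u, v) ∈ E).card)
    (hB' : B' = (univ \ A').filter fun v => s - 1 ≤ (A.filter fun u => (u, v) ∈ E).card)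
    (hB₂ : B₂ = B.filter fun u => (B'.filter fun v => (u, v) ∈ E).card < t - s)
    (hB₂' : B₂' = B'.filter fun v => (B.filter fun u => (u, v) ∈ E).card < t - s)
    (hC₂ : C₂ = ((univ \ A) \ B).filter fun u =>
      ((univ \ B₂').filter fun v => (u, v) ∈ E).card < s - 1)
    (hC₂' : C₂' = ((univ \ A') \ B').filter fun v =>
      ((univ \ B₂).filter fun u => (u, v) ∈ E).card < s - 1) :
    ∀ u ∈ C₂, ∀ v ∈ C₂', (u, v) ∈ E := by

  intro u hu v hv
  by_contra huv
  rw [hC₂, mem_filter] at hu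
  rw [hC₂', mem_filter] at hv
  obtain ⟨hu1, hucard⟩ := hu
  obtain ⟨hv1, hvcard⟩ := hv
  obtain ⟨hfree, hsatur⟩ := hsat
  rcases hsatur u v huv with ⟨S, T, hS, hT, hST⟩ | ⟨S, T, hS, hT, hST⟩
  · -- copy with |S| = s, |T| = t
    have hmem : u ∈ S ∧ v ∈ T := by
      by_contra h
      apply hfree
      left
      refine ⟨S, T, hS, hT, fun a ha b hb => ?_⟩
      rcases mem_insert.mp (hST a ha b hb) with h1 | h1
      · exfalso
        obtain ⟨rfl, rfl⟩ := Prod.mk.injEq .. ▸ h1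
        exact h ⟨ha, hb⟩
      · exact h1
    obtain ⟨huS, hvT⟩ := hmem
    have hedge : ∀ a ∈ S, ∀ b ∈ T, (a, b) ≠ (u, v) → (a, b) ∈ E := fun a ha b hb hne =>
      (mem_insert.mp (hST a ha b hb)).resolve_left hne
    -- find w ∈ (S.erase u) ∩ B₂
    set W : Finset (Fin n) := S.erase u with hW
    have hWcard : W.card = s - 1 := by rw [hW, card_erase_of_mem huS, hS]
    have hsub1 : W.filter (fun x => x ∉ B₂) ⊆ (univ \ B₂).filter fun x => (x, v) ∈ E := by
      intro x hx
      rw [mem_filter] at hx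
      obtain ⟨hxW, hxB⟩ := hx
      rw [mem_filter, mem_sdiff]
      refine ⟨⟨mem_univ _, hxB⟩, ?_⟩
      exact hedge x (mem_of_mem_erase hxW) v hvT
        (by simp [Prod.ext_iff, ne_of_mem_erase hxW])
    have hc1 : (W.filter (fun x => x ∉ B₂)).card < s - 1 :=
      lt_of_le_of_lt (card_le_card hsub1) hvcard
    have hc2 : (W.filter (fun x => x ∈ B₂)).card + (W.filter (fun x => x ∉ B₂)).card = s - 1 := by
      rw [card_filter_add_card_filter_not, hWcard]
    have hne : (W.filter (fun x => x ∈ B₂)).Nonempty := by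
      rw [← card_pos]; omega
    obtain ⟨w, hw⟩ := hne
    rw [mem_filter] at hw
    obtain ⟨hwW, hwB₂⟩ := hw
    -- w has < t - s neighbors in B'
    have hwdeg : (B'.filter fun y => (w, y) ∈ E).card < t - s := by
      rw [hB₂, mem_filter] at hwB₂
      exact hwB₂.2
    -- X = neighbors of u in T.erase v that lie in B₂'
    set X : Finset (Fin n) := (T.erase v).filter (fun y => y ∈ B₂') with hX
    have hXc : ((T.erase v).filter (fun y => y ∉ B₂')).card < s - 1 := by
      refine lt_of_le_of_lt (card_le_card ?_) hucard
      intro y hy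
      rw [mem_filter] at hy
      obtain ⟨hyT, hyB⟩ := hy
      rw [mem_filter, mem_sdiff]
      refine ⟨⟨mem_univ _, hyB⟩, ?_⟩
      exact hedge u huS y (mem_of_mem_erase hyT)
        (fun h => ne_of_mem_erase hyT (congrArg Prod.snd h))
    have hXsplit : X.card + ((T.erase v).filter (fun y => y ∉ B₂')).card = t - 1 := by
      rw [hX, card_filter_add_card_filter_not, card_erase_of_mem hvT, hT]
    have hXsub : X ⊆ B'.filter fun y => (w, y) ∈ E := by
      intro y hy
      rw [hX, mem_filter] at hy
      obtain ⟨hyT, hyB⟩ := hy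
      rw [mem_filter]
      constructor
      · rw [hB₂', mem_filter] at hyB
        exact hyB.1
      · exact hedge w (mem_of_mem_erase hwW) y (mem_of_mem_erase hyT)
          (by simp [Prod.ext_iff, ne_of_mem_erase hwW])
    have := card_le_card hXsub
    omega
  · -- copy with |S| = t, |T| = s
    have hmem : u ∈ S ∧ v ∈ T := by
      by_contra h
      apply hfree
      right
      refine ⟨S, T, hS, hT, fun a ha b hb => ?_⟩
      rcases mem_insert.mp (hST a ha b hb) with h1 | h1
      · exfalso
        obtain ⟨rfl, rfl⟩ := Prod.mk.injEq .. ▸ h1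
        exact h ⟨ha, hb⟩
      · exact h1
    obtain ⟨huS, hvT⟩ := hmem
    have hedge : ∀ a ∈ S, ∀ b ∈ T, (a, b) ≠ (u, v) → (a, b) ∈ E := fun a ha b hb hne =>
      (mem_insert.mp (hST a ha b hb)).resolve_left hne
    -- find w ∈ (T.erase v) ∩ B₂'
    set W : Finset (Fin n) := T.erase v with hW
    have hWcard : W.card = s - 1 := by rw [hW, card_erase_of_mem hvT, hT]
    have hsub1 : W.filter (fun y => y ∉ B₂') ⊆ (univ \ B₂').filter fun y => (u, y) ∈ E := by
      intro y hy
      rw [mem_filter] at hy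
      obtain ⟨hyW, hyB⟩ := hy
      rw [mem_filter, mem_sdiff]
      refine ⟨⟨mem_univ _, hyB⟩, ?_⟩
      exact hedge u huS y (mem_of_mem_erase hyW)
        (fun h => ne_of_mem_erase hyW (congrArg Prod.snd h))
    have hc1 : (W.filter (fun y => y ∉ B₂')).card < s - 1 :=
      lt_of_le_of_lt (card_le_card hsub1) hucard
    have hc2 : (W.filter (fun y => y ∈ B₂')).card + (W.filter (fun y => y ∉ B₂')).card = s - 1 := by
      rw [card_filter_add_card_filter_not, hWcard]
    have hne : (W.filter (fun y => y ∈ B₂')).Nonempty := by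
      rw [← card_pos]; omega
    obtain ⟨w, hw⟩ := hne
    rw [mem_filter] at hw
    obtain ⟨hwW, hwB₂'⟩ := hw
    have hwdeg : (B.filter fun x => (x, w) ∈ E).card < t - s := by
      rw [hB₂', mem_filter] at hwB₂'
      exact hwB₂'.2
    set X : Finset (Fin n) := (S.erase u).filter (fun x => x ∈ B₂) with hX
    have hXc : ((S.erase u).filter (fun x => x ∉ B₂)).card < s - 1 := by
      refine lt_of_le_of_lt (card_le_card ?_) hvcard
      intro x hx
      rw [mem_filter] at hx
      obtain ⟨hxS, hxB⟩ := hx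
      rw [mem_filter, mem_sdiff]
      refine ⟨⟨mem_univ _, hxB⟩, ?_⟩
      exact hedge x (mem_of_mem_erase hxS) v hvT
        (by simp [Prod.ext_iff, ne_of_mem_erase hxS])
    have hXsplit : X.card + ((S.erase u).filter (fun x => x ∉ B₂)).card = t - 1 := by
      rw [hX, card_filter_add_card_filter_not, card_erase_of_mem huS, hS]
    have hXsub : X ⊆ B.filter fun x => (x, w) ∈ E := by
      intro x hx
      rw [hX, mem_filter] at hx
      obtain ⟨hxS, hxB⟩ := hx
      rw [mem_filter]
      constructor
      · rw [hB₂, mem_filter] at hxB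
        exact hxB.1
      · exact hedge x (mem_of_mem_erase hxS) w (mem_of_mem_erase hwW)
          (by simp [Prod.ext_iff, ne_of_mem_erase hxS])
    have := card_le_card hXsub
    omega
end

section
/- Let G be a K_{s,t}-saturated n-by-n bipartite graph with fewer than (s+t-2)n - (s+t-2)^2 edges and minimum degree at least t-1. Then there exist non-adjacent vertices u₀ ∈ U and u₀' ∈ U', each of degree at most s+t-3. -/
open Finset

theorem stmt10 (n s t : ℕ) (hs : 1 ≤ s) (hst : s ≤ t) (htn : t ≤ n)
    (E : Finset (Fin n × Fin n)) (hsat : Saturated s t E)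
    (hminL : ∀ u : Fin n, t - 1 ≤ degL E u) (hminR : ∀ v : Fin n, t - 1 ≤ degR E v)
    (hfew : (E.card : ℤ) < ((s + t - 2 : ℕ) : ℤ) * n - ((s + t - 2 : ℕ) : ℤ) ^ 2) :
    ∃ u₀ v₀ : Fin n, (u₀, v₀) ∉ E ∧
      (degL E u₀ : ℤ) ≤ (s : ℤ) + t - 3 ∧ (degR E v₀ : ℤ) ≤ (s : ℤ) + t - 3 := by
  classical
  by_contra hcon
  push_neg at hcon
  set k := s + t - 2 with hk
  have hk1 : 1 ≤ k := by
    by_contra h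
    have hk0 : k = 0 := by omega
    rw [hk0] at hfew
    simp at hfew
    omega
  set A := Finset.univ.filter (fun u => degL E u < k) with hAdef
  set B := Finset.univ.filter (fun v => degR E v < k) with hBdef
  have hAn : A.card ≤ n := by
    simpa using (Finset.card_filter_le Finset.univ (fun u => degL E u < k))
  have hBn : B.card ≤ n := by
    simpa using (Finset.card_filter_le Finset.univ (fun v => degR E v < k))
  have hsumL : E.card = ∑ u : Fin n, degL E u :=
    Finset.card_eq_sum_card_fiberwise (fun x _ => Finset.mem_univ x.1)
  have hsumR : E.card = ∑ v : Fin n, degR E v :=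
    Finset.card_eq_sum_card_fiberwise (fun x _ => Finset.mem_univ x.2)
  have hEA : k * (n - A.card) ≤ E.card := by
    calc k * (n - A.card) = ∑ _u ∈ Finset.univ \ A, k := by
          rw [Finset.sum_const, Finset.card_sdiff_of_subset (Finset.subset_univ _)]
          simp [mul_comm]
      _ ≤ ∑ u ∈ Finset.univ \ A, degL E u := by
          apply Finset.sum_le_sum
          intro u hu
          simp [hAdef, Finset.mem_sdiff, Finset.mem_filter] at hu
          omega
      _ ≤ ∑ u : Fin n, degL E u :=
          Finset.sum_le_sum_of_subset (Finset.sdiff_subset)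
      _ = E.card := hsumL.symm
  have hEB : k * (n - B.card) ≤ E.card := by
    calc k * (n - B.card) = ∑ _v ∈ Finset.univ \ B, k := by
          rw [Finset.sum_const, Finset.card_sdiff_of_subset (Finset.subset_univ _)]
          simp [mul_comm]
      _ ≤ ∑ v ∈ Finset.univ \ B, degR E v := by
          apply Finset.sum_le_sum
          intro v hv
          simp [hBdef, Finset.mem_sdiff, Finset.mem_filter] at hv
          omega
      _ ≤ ∑ v : Fin n, degR E v :=
          Finset.sum_le_sum_of_subset (Finset.sdiff_subset)
      _ = E.card := hsumR.symm
  have hA : k < A.card := by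
    have hcast : (k : ℤ) * ((n : ℤ) - A.card) ≤ (E.card : ℤ) := by
      have h0 := Int.ofNat_le.mpr hEA
      push_cast [Nat.cast_sub hAn] at h0
      exact h0
    by_contra h
    push_neg at h
    have h2 : (A.card : ℤ) ≤ (k : ℤ) := by exact_mod_cast h
    have hk1' : (1 : ℤ) ≤ (k : ℤ) := by exact_mod_cast hk1
    nlinarith [hfew, hcast]
  have hB : k < B.card := by
    have hcast : (k : ℤ) * ((n : ℤ) - B.card) ≤ (E.card : ℤ) := by
      have h0 := Int.ofNat_le.mpr hEB
      push_cast [Nat.cast_sub hBn] at h0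
      exact h0
    by_contra h
    push_neg at h
    have h2 : (B.card : ℤ) ≤ (k : ℤ) := by exact_mod_cast h
    have hk1' : (1 : ℤ) ≤ (k : ℤ) := by exact_mod_cast hk1
    nlinarith [hfew, hcast]
  have hadj : ∀ u ∈ A, ∀ v ∈ B, (u, v) ∈ E := by
    intro u hu v hv
    by_contra hne
    simp [hAdef, Finset.mem_filter] at hu
    simp [hBdef, Finset.mem_filter] at hv
    have h1 := hcon u v hne
    have hL : (degL E u : ℤ) ≤ (s : ℤ) + t - 3 := by omega
    have hR : (degR E v : ℤ) ≤ (s : ℤ) + t - 3 := by omega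
    have h2 := h1 hL
    omega
  obtain ⟨S, hS, hScard⟩ := Finset.exists_subset_card_eq (show s ≤ A.card by omega)
  obtain ⟨T, hT, hTcard⟩ := Finset.exists_subset_card_eq (show t ≤ B.card by omega)
  exact hsat.1 (Or.inl ⟨S, T, hScard, hTcard, fun u hu v hv => hadj u (hS hu) v (hT hv)⟩)
end

section
/- The following construction yields a K_{s,t}-saturated n-by-n bipartite graph with exactly (s+t-2)n - ⌊((s+t-2)/2)²⌋ edges: partition U = V ∪ W and U' = V' ∪ W' with |V| = |V'| = ⌊(s+t-2)/2⌋; partition W = W₁ ∪ ... ∪ W_l and W' = W₁' ∪ ... ∪ W_l' with |W_i| = |W_i'| ≥ t-s; include all edges between V and V'; between each W_i and W_i' include a (t-s)-regular bipartite graph; choose S' ⊆ V' of size s-1 and S_i ⊆ V of size s-1 for each i; include all edges between W_i and S' and between S_i and W_i'; no other edges. Then the resulting graph is K_{s,t}-saturated, i.e., adding any missing edge between U and U' creates a copy of K_{s,t}. -/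
open Finset

theorem stmt12 (n s t l : ℕ) (hs : 1 ≤ s) (hst : s ≤ t)
    (E : Finset (Fin n × Fin n))
    (V W V' W' : Finset (Fin n))
    (Wp Wp' : Fin l → Finset (Fin n))
    (S' : Finset (Fin n)) (Si : Fin l → Finset (Fin n))
    (hVW : Disjoint V W) (hVWu : V ∪ W = univ)
    (hVW' : Disjoint V' W') (hVWu' : V' ∪ W' = univ)
    (hV : V.card = (s + t - 2) / 2) (hV' : V'.card = (s + t - 2) / 2)
    (hWdisj : ∀ i j, i ≠ j → Disjoint (Wp i) (Wp j))
    (hWdisj' : ∀ i j, i ≠ j → Disjoint (Wp' i) (Wp' j))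
    (hWu : univ.biUnion Wp = W) (hWu' : univ.biUnion Wp' = W')
    (hWc : ∀ i, (Wp i).card = (Wp' i).card)
    (hWsize : ∀ i, t - s ≤ (Wp i).card)
    (hS'sub : S' ⊆ V') (hS'c : S'.card = s - 1)
    (hSisub : ∀ i, Si i ⊆ V) (hSic : ∀ i, (Si i).card = s - 1)
    (hE1 : ∀ u ∈ V, ∀ v ∈ V', (u, v) ∈ E)
    (hE2 : ∀ i, ∀ u ∈ Wp i, ∀ v ∈ S', (u, v) ∈ E)
    (hE3 : ∀ i, ∀ u ∈ Si i, ∀ v ∈ Wp' i, (u, v) ∈ E)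
    (hreg1 : ∀ i, ∀ u ∈ Wp i, ((Wp' i).filter fun v => (u, v) ∈ E).card = t - s)
    (hreg2 : ∀ i, ∀ v ∈ Wp' i, ((Wp i).filter fun u => (u, v) ∈ E).card = t - s)
    (hE4 : ∀ u v : Fin n, (u, v) ∈ E →
      (u ∈ V ∧ v ∈ V') ∨ ∃ i, (u ∈ Wp i ∧ v ∈ Wp' i) ∨
        (u ∈ Wp i ∧ v ∈ S') ∨ (u ∈ Si i ∧ v ∈ Wp' i)) :
    ∀ u v : Fin n, (u, v) ∉ E →
      containsK (insert (u, v) E) s t ∨ containsK (insert (u, v) E) t s := by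
  intro u v huv
  have hWpW : ∀ i, Wp i ⊆ W := fun i => hWu ▸ subset_biUnion_of_mem Wp (mem_univ i)
  have hWpW' : ∀ i, Wp' i ⊆ W' := fun i => hWu' ▸ subset_biUnion_of_mem Wp' (mem_univ i)
  have hu : u ∈ V ∨ ∃ i, u ∈ Wp i := by
    have h : u ∈ V ∪ W := hVWu ▸ mem_univ u
    rcases mem_union.1 h with h | h
    · exact Or.inl h
    · right
      rw [← hWu] at h
      obtain ⟨i, -, hi⟩ := mem_biUnion.1 h
      exact ⟨i, hi⟩
  have hv : v ∈ V' ∨ ∃ j, v ∈ Wp' j := by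
    have h : v ∈ V' ∪ W' := hVWu' ▸ mem_univ v
    rcases mem_union.1 h with h | h
    · exact Or.inl h
    · right
      rw [← hWu'] at h
      obtain ⟨j, -, hj⟩ := mem_biUnion.1 h
      exact ⟨j, hj⟩
  rcases hv with hvV | ⟨j, hvj⟩
  · -- v ∈ V'
    rcases hu with huV | ⟨i, hui⟩
    · exact absurd (hE1 u huV v hvV) huv
    set N : Finset (Fin n) := (Wp' i).filter fun w => (u, w) ∈ E with hNdef
    have hNcard : N.card = t - s := hreg1 i u hui
    have hvS' : v ∉ S' := fun h => huv (hE2 i u hui v h)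
    have hvN : v ∉ N := fun h => huv ((mem_filter.1 h).2)
    have huSi : u ∉ Si i := fun h =>
      (Finset.disjoint_left.mp hVW (hSisub i h)) (hWpW i hui)
    have hS'N : Disjoint S' N := by
      apply Finset.disjoint_left.mpr
      intro a ha ha'
      exact (Finset.disjoint_left.mp hVW' (hS'sub ha)) (hWpW' i ((mem_filter.1 ha').1))
    refine Or.inl ⟨insert u (Si i), insert v (S' ∪ N), ?_, ?_, ?_⟩
    · rw [card_insert_of_notMem huSi, hSic i]; omega
    · rw [card_insert_of_notMem (by simp [hvS', hvN]),
        card_union_of_disjoint hS'N, hS'c, hNcard]; omega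
    · intro a ha b hb
      rcases mem_insert.1 ha with rfl | haS <;> rcases mem_insert.1 hb with rfl | hbT
      · exact mem_insert_self _ _
      · rcases mem_union.1 hbT with hb' | hb'
        · exact mem_insert_of_mem (hE2 i a hui b hb')
        · exact mem_insert_of_mem ((mem_filter.1 hb').2)
      · exact mem_insert_of_mem (hE1 a (hSisub i haS) b hvV)
      · rcases mem_union.1 hbT with hb' | hb'
        · exact mem_insert_of_mem (hE1 a (hSisub i haS) b (hS'sub hb'))
        · exact mem_insert_of_mem (hE3 i a haS b ((mem_filter.1 hb').1))
  · -- v ∈ Wp' j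
    set N : Finset (Fin n) := (Wp j).filter fun w => (w, v) ∈ E with hNdef
    have hNcard : N.card = t - s := hreg2 j v hvj
    have huSi : u ∉ Si j := fun h => huv (hE3 j u h v hvj)
    have huN : u ∉ N := fun h => huv ((mem_filter.1 h).2)
    have hSiN : Disjoint (Si j) N := by
      apply Finset.disjoint_left.mpr
      intro a ha ha'
      exact (Finset.disjoint_left.mp hVW (hSisub j ha)) (hWpW j ((mem_filter.1 ha').1))
    have hvS' : v ∉ S' := fun h =>
      (Finset.disjoint_left.mp hVW' (hS'sub h)) (hWpW' j hvj)
    refine Or.inr ⟨insert u (Si j ∪ N), insert v S', ?_, ?_, ?_⟩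
    · rw [card_insert_of_notMem (by simp [huSi, huN]),
        card_union_of_disjoint hSiN, hSic j, hNcard]; omega
    · rw [card_insert_of_notMem hvS', hS'c]; omega
    · intro a ha b hb
      rcases mem_insert.1 ha with rfl | haS <;> rcases mem_insert.1 hb with rfl | hbT
      · exact mem_insert_self _ _
      · rcases hu with huV | ⟨i, hui⟩
        · exact mem_insert_of_mem (hE1 a huV b (hS'sub hbT))
        · exact mem_insert_of_mem (hE2 i a hui b hbT)
      · rcases mem_union.1 haS with ha' | ha'
        · exact mem_insert_of_mem (hE3 j a ha' b hvj)
        · exact mem_insert_of_mem ((mem_filter.1 ha').2)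
      · rcases mem_union.1 haS with ha' | ha'
        · exact mem_insert_of_mem (hE1 a (hSisub j ha') b (hS'sub hbT))
        · exact mem_insert_of_mem (hE2 j a ((mem_filter.1 ha').1) b hbT)
end

section
/- The graph from the Moshkovitz–Shapira-type construction has exactly (s+t-2)n - ⌊((s+t-2)/2)²⌋ edges. -/
open Finset

lemma arith13 (m n k : ℕ) (hk : k = m / 2) (hkn : k ≤ n) :
    k * k + m * (n - k) = m * n - m ^ 2 / 4 := by
  obtain ⟨d, rfl⟩ : ∃ d, n = k + d := ⟨n - k, by omega⟩
  have hm : m = 2 * k ∨ m = 2 * k + 1 := by omega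
  have hd : k + d - k = d := by omega
  rcases hm with rfl | rfl
  · have h1 : (2 * k) ^ 2 = 4 * (k * k) := by ring
    have h2 : (2 * k) ^ 2 / 4 = k * k := by omega
    rw [hd, h2]
    have h3 : 2 * k * (k + d) = k * k + (k * k + 2 * k * d) := by ring
    rw [h3, Nat.add_sub_cancel_left]
  · have h1 : (2 * k + 1) ^ 2 = 4 * (k * k + k) + 1 := by ring
    have h2 : (2 * k + 1) ^ 2 / 4 = k * k + k := by omega
    rw [hd, h2]
    have h3 : (2 * k + 1) * (k + d) = (k * k + k) + (k * k + (2 * k + 1) * d) := by ring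
    rw [h3, Nat.add_sub_cancel_left]

theorem stmt13 (n s t l : ℕ) (hs : 1 ≤ s) (hst : s ≤ t)
    (E : Finset (Fin n × Fin n))
    (V W V' W' : Finset (Fin n))
    (Wp Wp' : Fin l → Finset (Fin n))
    (S' : Finset (Fin n)) (Si : Fin l → Finset (Fin n))
    (hVW : Disjoint V W) (hVWu : V ∪ W = univ)
    (hVW' : Disjoint V' W') (hVWu' : V' ∪ W' = univ)
    (hV : V.card = (s + t - 2) / 2) (hV' : V'.card = (s + t - 2) / 2)
    (hWdisj : ∀ i j, i ≠ j → Disjoint (Wp i) (Wp j))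
    (hWdisj' : ∀ i j, i ≠ j → Disjoint (Wp' i) (Wp' j))
    (hWu : univ.biUnion Wp = W) (hWu' : univ.biUnion Wp' = W')
    (hWc : ∀ i, (Wp i).card = (Wp' i).card)
    (hWsize : ∀ i, t - s ≤ (Wp i).card)
    (hS'sub : S' ⊆ V') (hS'c : S'.card = s - 1)
    (hSisub : ∀ i, Si i ⊆ V) (hSic : ∀ i, (Si i).card = s - 1)
    (hE1 : ∀ u ∈ V, ∀ v ∈ V', (u, v) ∈ E)
    (hE2 : ∀ i, ∀ u ∈ Wp i, ∀ v ∈ S', (u, v) ∈ E)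
    (hE3 : ∀ i, ∀ u ∈ Si i, ∀ v ∈ Wp' i, (u, v) ∈ E)
    (hreg1 : ∀ i, ∀ u ∈ Wp i, ((Wp' i).filter fun v => (u, v) ∈ E).card = t - s)
    (hreg2 : ∀ i, ∀ v ∈ Wp' i, ((Wp i).filter fun u => (u, v) ∈ E).card = t - s)
    (hE4 : ∀ u v : Fin n, (u, v) ∈ E →
      (u ∈ V ∧ v ∈ V') ∨ ∃ i, (u ∈ Wp i ∧ v ∈ Wp' i) ∨
        (u ∈ Wp i ∧ v ∈ S') ∨ (u ∈ Si i ∧ v ∈ Wp' i)) :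
    E.card = (s + t - 2) * n - (s + t - 2) ^ 2 / 4 := by
  classical
  -- abbreviations
  have hWsub : ∀ i, Wp i ⊆ W := fun i => hWu ▸ subset_biUnion_of_mem Wp (mem_univ i)
  have hWsub' : ∀ i, Wp' i ⊆ W' := fun i => hWu' ▸ subset_biUnion_of_mem Wp' (mem_univ i)
  have hdVW : ∀ x, x ∈ V → x ∈ W → False := fun x hx hw => Finset.disjoint_left.mp hVW hx hw
  have hdVW' : ∀ x, x ∈ V' → x ∈ W' → False := fun x hx hw => Finset.disjoint_left.mp hVW' hx hw
  set A : Finset (Fin n × Fin n) := V ×ˢ V' with hA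
  set B : Finset (Fin n × Fin n) := univ.biUnion (fun i => Wp i ×ˢ S') with hB
  set C : Finset (Fin n × Fin n) := univ.biUnion (fun i => Si i ×ˢ Wp' i) with hC
  set D : Finset (Fin n × Fin n) :=
    univ.biUnion (fun i => (Wp i ×ˢ Wp' i).filter (· ∈ E)) with hD
  -- E is the union of the four pieces
  have hEeq : E = A ∪ (B ∪ (C ∪ D)) := by
    ext ⟨u, v⟩
    simp only [hA, hB, hC, hD, mem_union, mem_biUnion, mem_product, mem_filter, mem_univ,
      true_and]
    constructor
    · intro h
      rcases hE4 u v h with h1 | ⟨i, h2 | h3 | h4⟩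
      · exact Or.inl h1
      · exact Or.inr (Or.inr (Or.inr ⟨i, h2, h⟩))
      · exact Or.inr (Or.inl ⟨i, h3⟩)
      · exact Or.inr (Or.inr (Or.inl ⟨i, h4⟩))
    · rintro (⟨hu, hv⟩ | ⟨i, hu, hv⟩ | ⟨i, hu, hv⟩ | ⟨i, _, hE⟩)
      · exact hE1 u hu v hv
      · exact hE2 i u hu v hv
      · exact hE3 i u hu v hv
      · exact hE
  -- disjointness of the pieces
  have dAB : Disjoint A B := by
    rw [Finset.disjoint_left]
    rintro ⟨u, v⟩ hp hq
    simp only [hA, hB, mem_product, mem_biUnion, mem_univ, true_and] at hp hq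
    obtain ⟨i, hu, _⟩ := hq
    exact hdVW u hp.1 (hWsub i hu)
  have dAC : Disjoint A C := by
    rw [Finset.disjoint_left]
    rintro ⟨u, v⟩ hp hq
    simp only [hA, hC, mem_product, mem_biUnion, mem_univ, true_and] at hp hq
    obtain ⟨i, _, hv⟩ := hq
    exact hdVW' v hp.2 (hWsub' i hv)
  have dAD : Disjoint A D := by
    rw [Finset.disjoint_left]
    rintro ⟨u, v⟩ hp hq
    simp only [hA, hD, mem_product, mem_biUnion, mem_filter, mem_univ, true_and] at hp hq
    obtain ⟨i, ⟨hu, _⟩, _⟩ := hq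
    exact hdVW u hp.1 (hWsub i hu)
  have dBC : Disjoint B C := by
    rw [Finset.disjoint_left]
    rintro ⟨u, v⟩ hp hq
    simp only [hB, hC, mem_product, mem_biUnion, mem_univ, true_and] at hp hq
    obtain ⟨i, hu, _⟩ := hp
    obtain ⟨j, hu', _⟩ := hq
    exact hdVW u (hSisub j hu') (hWsub i hu)
  have dBD : Disjoint B D := by
    rw [Finset.disjoint_left]
    rintro ⟨u, v⟩ hp hq
    simp only [hB, hD, mem_product, mem_biUnion, mem_filter, mem_univ, true_and] at hp hq
    obtain ⟨i, _, hv⟩ := hp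
    obtain ⟨j, ⟨_, hv'⟩, _⟩ := hq
    exact hdVW' v (hS'sub hv) (hWsub' j hv')
  have dCD : Disjoint C D := by
    rw [Finset.disjoint_left]
    rintro ⟨u, v⟩ hp hq
    simp only [hC, hD, mem_product, mem_biUnion, mem_filter, mem_univ, true_and] at hp hq
    obtain ⟨i, hu, _⟩ := hp
    obtain ⟨j, ⟨hu', _⟩, _⟩ := hq
    exact hdVW u (hSisub i hu) (hWsub j hu')
  -- cardinalities
  have hn : V.card + W.card = n := by
    have := Finset.card_union_of_disjoint hVW
    rw [hVWu, card_univ, Fintype.card_fin] at this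
    omega
  have hn' : V'.card + W'.card = n := by
    have := Finset.card_union_of_disjoint hVW'
    rw [hVWu', card_univ, Fintype.card_fin] at this
    omega
  have hsumW : ∑ i, (Wp i).card = W.card := by
    rw [← hWu, Finset.card_biUnion (fun i _ j _ h => hWdisj i j h)]
  have hsumW' : ∑ i, (Wp' i).card = W'.card := by
    rw [← hWu', Finset.card_biUnion (fun i _ j _ h => hWdisj' i j h)]
  have hWW' : W.card = W'.card := by
    rw [← hsumW, ← hsumW']
    exact Finset.sum_congr rfl fun i _ => hWc i
  have cardA : A.card = V.card * V'.card := Finset.card_product _ _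
  have cardB : B.card = W.card * (s - 1) := by
    rw [hB, Finset.card_biUnion]
    · rw [← hsumW]
      rw [Finset.sum_congr rfl fun i (_ : i ∈ univ) => by
        rw [Finset.card_product, hS'c]]
      exact (Finset.sum_mul _ _ _).symm
    · intro i _ j _ hij
      rw [Function.onFun, Finset.disjoint_left]
      rintro ⟨u, v⟩ hp hq
      exact Finset.disjoint_left.mp (hWdisj i j hij) (mem_product.1 hp).1 (mem_product.1 hq).1
  have cardC : C.card = (s - 1) * W'.card := by
    rw [hC, Finset.card_biUnion]
    · rw [← hsumW']
      rw [Finset.sum_congr rfl fun i (_ : i ∈ univ) => by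
        rw [Finset.card_product, hSic]]
      exact (Finset.mul_sum _ _ _).symm
    · intro i _ j _ hij
      rw [Function.onFun, Finset.disjoint_left]
      rintro ⟨u, v⟩ hp hq
      exact Finset.disjoint_left.mp (hWdisj' i j hij) (mem_product.1 hp).2 (mem_product.1 hq).2
  have cardDi : ∀ i, ((Wp i ×ˢ Wp' i).filter (· ∈ E)).card = (Wp i).card * (t - s) := by
    intro i
    rw [Finset.card_eq_sum_card_fiberwise
      (f := Prod.fst) (t := Wp i)
      (fun p hp => (mem_product.1 (Finset.mem_of_mem_filter p hp)).1)]
    have key : ∀ u ∈ Wp i,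
        (((Wp i ×ˢ Wp' i).filter (· ∈ E)).filter fun p => p.1 = u).card = t - s := by
      intro u hu
      have himg : (((Wp i ×ˢ Wp' i).filter (· ∈ E)).filter fun p => p.1 = u) =
          ((Wp' i).filter fun v => (u, v) ∈ E).image (fun v => (u, v)) := by
        ext ⟨a, b⟩
        simp only [mem_filter, mem_product, mem_image]
        constructor
        · rintro ⟨⟨⟨ha, hb⟩, hab⟩, rfl⟩
          exact ⟨b, ⟨hb, hab⟩, rfl⟩
        · rintro ⟨v, ⟨hv, hv'⟩, heq⟩
          obtain ⟨rfl, rfl⟩ := Prod.mk.injEq _ _ _ _ ▸ heq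
          exact ⟨⟨⟨hu, hv⟩, hv'⟩, rfl⟩
      rw [himg, Finset.card_image_of_injective _ (fun a b h => by
        simpa using congrArg Prod.snd h)]
      exact hreg1 i u hu
    rw [Finset.sum_congr rfl key, Finset.sum_const, smul_eq_mul]
  have cardD : D.card = W.card * (t - s) := by
    rw [hD, Finset.card_biUnion]
    · rw [← hsumW]
      rw [Finset.sum_congr rfl fun i (_ : i ∈ univ) => cardDi i]
      exact (Finset.sum_mul _ _ _).symm
    · intro i _ j _ hij
      rw [Function.onFun, Finset.disjoint_left]
      rintro ⟨u, v⟩ hp hq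
      exact Finset.disjoint_left.mp (hWdisj i j hij)
        (mem_product.1 (Finset.mem_of_mem_filter _ hp)).1
        (mem_product.1 (Finset.mem_of_mem_filter _ hq)).1
  -- assemble
  have hcard : E.card = A.card + (B.card + (C.card + D.card)) := by
    rw [hEeq, Finset.card_union_of_disjoint, Finset.card_union_of_disjoint,
      Finset.card_union_of_disjoint dCD]
    · exact Finset.disjoint_union_right.2 ⟨dBC, dBD⟩
    · exact Finset.disjoint_union_right.2 ⟨dAB, Finset.disjoint_union_right.2 ⟨dAC, dAD⟩⟩
  rw [hcard, cardA, cardB, cardC, cardD, hV, hV', ← hWW']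
  set k := (s + t - 2) / 2 with hk
  set w := W.card with hw
  set a := s - 1 with ha
  set b := t - s with hb
  have habm : a + a + b = s + t - 2 := by omega
  have hcomb : k * k + (w * a + (a * w + w * b)) = k * k + (s + t - 2) * w := by
    rw [← habm]
    ring
  rw [hcomb]
  have hkn : k ≤ n := by
    have : V.card ≤ n := by simpa using Finset.card_le_univ V
    omega
  have hwnk : w = n - k := by omega
  rw [hwnk]
  exact arith13 (s + t - 2) n k rfl hkn
end

section
/- An n-by-n bipartite graph in which some set of s-1 vertices of U and some set of t-1 vertices of U' are each complete to the opposite side (and there are no other edges) is K_{(s,t)}-saturated and has exactly n² - (n-s+1)(n-t+1) edges. -/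
open Finset

theorem stmt17 (n s t : ℕ) (hs : 1 ≤ s) (hst : s ≤ t) (htn : t ≤ n)
    (S : Finset (Fin n)) (T' : Finset (Fin n))
    (hS : S.card = s - 1) (hT' : T'.card = t - 1)
    (E : Finset (Fin n × Fin n))
    (hE : E = univ.filter fun p : Fin n × Fin n => p.1 ∈ S ∨ p.2 ∈ T') :
    ¬ containsK E s t ∧
      (∀ u v : Fin n, (u, v) ∉ E → containsK (insert (u, v) E) s t) ∧
      E.card = n ^ 2 - (n - s + 1) * (n - t + 1) := by

  subst hE
  refine ⟨?_, ?_, ?_⟩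
  · rintro ⟨S₀, T₀, hS₀, hT₀, h⟩
    have hu : ∃ u ∈ S₀, u ∉ S := by
      by_contra hc
      push_neg at hc
      have := Finset.card_le_card hc
      omega
    have hv : ∃ v ∈ T₀, v ∉ T' := by
      by_contra hc
      push_neg at hc
      have := Finset.card_le_card hc
      omega
    obtain ⟨u, huS₀, huS⟩ := hu
    obtain ⟨v, hvT₀, hvT⟩ := hv
    have := h u huS₀ v hvT₀
    simp only [Finset.mem_filter, Finset.mem_univ, true_and] at this
    tauto
  · intro u v huv
    simp only [Finset.mem_filter, Finset.mem_univ, true_and] at huv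
    push_neg at huv
    refine ⟨insert u S, insert v T', ?_, ?_, ?_⟩
    · rw [Finset.card_insert_of_notMem huv.1, hS]; omega
    · rw [Finset.card_insert_of_notMem huv.2, hT']; omega
    · intro x hx y hy
      rcases Finset.mem_insert.mp hx with hx | hx
      · rcases Finset.mem_insert.mp hy with hy | hy
        · subst hx; subst hy; exact Finset.mem_insert_self _ _
        · refine Finset.mem_insert_of_mem ?_
          simp only [Finset.mem_filter, Finset.mem_univ, true_and]
          right; exact hy
      · refine Finset.mem_insert_of_mem ?_
        simp only [Finset.mem_filter, Finset.mem_univ, true_and]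
        left; exact hx
  · have key := Finset.card_filter_add_card_filter_not
      (s := (Finset.univ : Finset (Fin n × Fin n)))
      (p := fun p : Fin n × Fin n => p.1 ∈ S ∨ p.2 ∈ T')
    have hcompl : (Finset.univ.filter fun p : Fin n × Fin n => ¬(p.1 ∈ S ∨ p.2 ∈ T'))
        = Sᶜ ×ˢ T'ᶜ := by
      ext p
      simp [Finset.mem_product, not_or]
    have hc1 : (Sᶜ : Finset (Fin n)).card = n - (s - 1) := by
      rw [Finset.card_compl, hS, Fintype.card_fin]
    have hc2 : (T'ᶜ : Finset (Fin n)).card = n - (t - 1) := by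
      rw [Finset.card_compl, hT', Fintype.card_fin]
    rw [hcompl, Finset.card_product, hc1, hc2] at key
    have huniv : (Finset.univ : Finset (Fin n × Fin n)).card = n ^ 2 := by
      simp [Fintype.card_fin, sq]
    rw [huniv] at key
    have h1 : n - (s - 1) = n - s + 1 := by omega
    have h2 : n - (t - 1) = n - t + 1 := by omega
    rw [h1, h2] at key
    omega
end

section
/- If G is a K_{2,3}-saturated n-by-n bipartite graph with exactly 3n-3 edges and minimum degree 2, with non-adjacent degree-2 vertices u₀ ∈ U, u₀' ∈ U', then adding the edge u₀u₀' creates a K_{2,3} all of whose vertices lie in A₀ ∪ A₀', where A₀ = {u₀} ∪ N(u₀') and A₀' = {u₀'} ∪ N(u₀), and consequently the bipartite graph spanned between A₀ and A₀' has at least 6 edges. -/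
open Finset

theorem stmt18 (n : ℕ) (hn : 4 ≤ n)
    (E : Finset (Fin n × Fin n)) (hsat : Saturated 2 3 E)
    (hcard : E.card = 3 * n - 3)
    (hminL : ∀ u : Fin n, 2 ≤ degL E u) (hminR : ∀ v : Fin n, 2 ≤ degR E v)
    (u₀ u₀' : Fin n) (hd₀ : degL E u₀ = 2) (hd₀' : degR E u₀' = 2)
    (hnonadj : (u₀, u₀') ∉ E)
    (A₀ A₀' : Finset (Fin n))
    (hA₀ : A₀ = insert u₀ (univ.filter fun u => (u, u₀') ∈ E))
    (hA₀' : A₀' = insert u₀' (univ.filter fun v => (u₀, v) ∈ E)) :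
    (∃ S T : Finset (Fin n), S ⊆ A₀ ∧ T ⊆ A₀' ∧
        ((S.card = 2 ∧ T.card = 3) ∨ (S.card = 3 ∧ T.card = 2)) ∧
        u₀ ∈ S ∧ u₀' ∈ T ∧
        ∀ u ∈ S, ∀ v ∈ T, (u, v) ∈ insert (u₀, u₀') E) ∧
      6 ≤ (E.filter fun p => p.1 ∈ A₀ ∧ p.2 ∈ A₀').card := by
  obtain ⟨hfree, hadd⟩ := hsat
  have hfree23 : ¬ containsK E 2 3 := fun h => hfree (Or.inl h)
  have hfree32 : ¬ containsK E 3 2 := fun h => hfree (Or.inr h)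
  have key : ∀ (S T : Finset (Fin n)) (a b : ℕ), ¬ containsK E a b →
      S.card = a → T.card = b →
      (∀ u ∈ S, ∀ v ∈ T, (u, v) ∈ insert (u₀, u₀') E) →
      (u₀ ∈ S ∧ u₀' ∈ T) ∧ S ⊆ A₀ ∧ T ⊆ A₀' := by
    intro S T a b hfr hS hT hall
    have hmem : u₀ ∈ S ∧ u₀' ∈ T := by
      by_contra h
      refine hfr ⟨S, T, hS, hT, fun u hu v hv => ?_⟩
      rcases mem_insert.mp (hall u hu v hv) with heq | hE
      · obtain ⟨h1, h2⟩ := Prod.mk.inj heq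
        subst h1; subst h2
        exact absurd ⟨hu, hv⟩ h
      · exact hE
    obtain ⟨hu₀S, hu₀'T⟩ := hmem
    refine ⟨⟨hu₀S, hu₀'T⟩, ?_, ?_⟩
    · intro u hu
      rw [hA₀]
      by_cases hcase : u = u₀
      · subst hcase; exact mem_insert_self _ _
      · apply mem_insert_of_mem
        rw [mem_filter]
        refine ⟨mem_univ _, ?_⟩
        rcases mem_insert.mp (hall u hu u₀' hu₀'T) with heq | hE
        · exact absurd (Prod.mk.inj heq).1 hcase
        · exact hE
    · intro v hv
      rw [hA₀']
      by_cases hcase : v = u₀'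
      · subst hcase; exact mem_insert_self _ _
      · apply mem_insert_of_mem
        rw [mem_filter]
        refine ⟨mem_univ _, ?_⟩
        rcases mem_insert.mp (hall u₀ hu₀S v hv) with heq | hE
        · exact absurd (Prod.mk.inj heq).2 hcase
        · exact hE
  have main : ∃ S T : Finset (Fin n), S ⊆ A₀ ∧ T ⊆ A₀' ∧
      ((S.card = 2 ∧ T.card = 3) ∨ (S.card = 3 ∧ T.card = 2)) ∧
      u₀ ∈ S ∧ u₀' ∈ T ∧
      ∀ u ∈ S, ∀ v ∈ T, (u, v) ∈ insert (u₀, u₀') E := by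
    rcases hadd u₀ u₀' hnonadj with ⟨S, T, hS, hT, hall⟩ | ⟨S, T, hS, hT, hall⟩
    · obtain ⟨⟨h1, h2⟩, h3, h4⟩ := key S T 2 3 hfree23 hS hT hall
      exact ⟨S, T, h3, h4, Or.inl ⟨hS, hT⟩, h1, h2, hall⟩
    · obtain ⟨⟨h1, h2⟩, h3, h4⟩ := key S T 3 2 hfree32 hS hT hall
      exact ⟨S, T, h3, h4, Or.inr ⟨hS, hT⟩, h1, h2, hall⟩
  refine ⟨main, ?_⟩
  obtain ⟨S, T, hSA, hTA, hcards, hu₀S, hu₀'T, hall⟩ := main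
  set F1 := E.filter (fun p => p.1 = u₀) with hF1
  set F2 := E.filter (fun p => p.2 = u₀') with hF2
  set F3 := (S.erase u₀) ×ˢ (T.erase u₀') with hF3
  have hF1c : F1.card = 2 := hd₀
  have hF2c : F2.card = 2 := hd₀'
  have hF3c : F3.card = 2 := by
    rw [hF3, card_product, card_erase_of_mem hu₀S, card_erase_of_mem hu₀'T]
    rcases hcards with ⟨h1, h2⟩ | ⟨h1, h2⟩ <;> rw [h1, h2]
  have hsub : F1 ∪ F2 ∪ F3 ⊆ E.filter fun p => p.1 ∈ A₀ ∧ p.2 ∈ A₀' := by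
    intro p hp
    rw [mem_filter]
    rcases mem_union.mp hp with hp' | hp3
    · rcases mem_union.mp hp' with hp1 | hp2
      · obtain ⟨hpE, he1⟩ := mem_filter.mp hp1
        refine ⟨hpE, ?_, ?_⟩
        · rw [hA₀, he1]; exact mem_insert_self _ _
        · rw [hA₀']
          apply mem_insert_of_mem
          rw [mem_filter]
          refine ⟨mem_univ _, ?_⟩
          rw [← he1]
          exact hpE
      · obtain ⟨hpE, he2⟩ := mem_filter.mp hp2
        refine ⟨hpE, ?_, ?_⟩
        · rw [hA₀]
          apply mem_insert_of_mem
          rw [mem_filter]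
          refine ⟨mem_univ _, ?_⟩
          rw [← he2]
          exact hpE
        · rw [hA₀', he2]; exact mem_insert_self _ _
    · obtain ⟨ha, hb⟩ := mem_product.mp hp3
      have haS := mem_of_mem_erase ha
      have hbT := mem_of_mem_erase hb
      have hpE : p ∈ E := by
        rcases mem_insert.mp (hall _ haS _ hbT) with heq | hE
        · exact absurd (Prod.mk.inj heq).1 (ne_of_mem_erase ha)
        · exact hE
      exact ⟨hpE, hSA haS, hTA hbT⟩
  have d12 : Disjoint F1 F2 := by
    rw [disjoint_left]
    intro p h1 h2
    obtain ⟨hpE, e1⟩ := mem_filter.mp h1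
    obtain ⟨_, e2⟩ := mem_filter.mp h2
    apply hnonadj
    have hpe : p = (u₀, u₀') := Prod.ext e1 e2
    rwa [← hpe]
  have d13 : Disjoint (F1 ∪ F2) F3 := by
    rw [disjoint_right]
    intro p h3 h12
    obtain ⟨ha, hb⟩ := mem_product.mp h3
    rcases mem_union.mp h12 with h1 | h2
    · exact ne_of_mem_erase ha (mem_filter.mp h1).2
    · exact ne_of_mem_erase hb (mem_filter.mp h2).2
  calc 6 = F1.card + F2.card + F3.card := by rw [hF1c, hF2c, hF3c]
    _ = (F1 ∪ F2 ∪ F3).card := by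
        rw [card_union_of_disjoint d13, card_union_of_disjoint d12]
    _ ≤ _ := card_le_card hsub
end
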